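/- arXiv:2605.19853 — 9 statements merged into one kernel-verified Lean document; each statement's English description precedes it below -/
import Mathlib

section
/- If (I, J, R) is an ECOC crown decomposition of a graph G, then there exists an optimal l-ECOC solution S' (a minimum-size vertex set whose deletion leaves all components of size exactly l) such that J ⊆ S' and I ∩ S' = ∅. -/
open SimpleGraph

variable {V : Type*}

/-- Every connected component of `G.induce X` has exactly `l` vertices. -/
def AllCompsSize (G : SimpleGraph V) (X : Set V) (l : ℕ) : Prop :=
  ∀ c : (G.induce X).ConnectedComponent, Nat.card c.supp = l

/-- `S` is an `l`-ECOC solution: every component of `G - S` has exactly `l` vertices. -/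
def IsECOCSol (G : SimpleGraph V) (l : ℕ) (S : Set V) : Prop :=
  AllCompsSize G Sᶜ l

/-- The (open) neighborhood of a set `X`. -/
def nbhd (G : SimpleGraph V) (X : Set V) : Set V :=
  {v | v ∉ X ∧ ∃ u ∈ X, G.Adj u v}

/-- ECOC crown decomposition. -/
def IsECOCCrown (G : SimpleGraph V) (l : ℕ) (I J R : Set V) : Prop :=
  (I ∪ J ∪ R = Set.univ) ∧ Disjoint I J ∧ Disjoint I R ∧ Disjoint J R ∧
  AllCompsSize G I l ∧
  (∀ u ∈ I, ∀ v ∈ R, ¬ G.Adj u v) ∧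
  ∃ M : J → (G.induce I).ConnectedComponent, Function.Injective M ∧
    ∀ x : J, ∃ u ∈ (M x).supp, G.Adj (u : V) (x : V)

/-- Strict ECOC crown decomposition. -/
def IsStrictECOCCrown (G : SimpleGraph V) (l : ℕ) (I J R : Set V) : Prop :=
  IsECOCCrown G l I J R ∧ I.Nonempty ∧
  Nat.card J + 1 ≤ Nat.card ((G.induce I).ConnectedComponent)

/-- `u` and `v` lie in `X` and in the same connected component of `G.induce X`. -/
def ReachIn (G : SimpleGraph V) (X : Set V) (u v : V) : Prop :=
  ∃ (hu : u ∈ X) (hv : v ∈ X), (G.induce X).Reachable ⟨u, hu⟩ ⟨v, hv⟩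

/-- Feasibility for the LP relaxation WECOC-LP. -/
def LPFeasible (G : SimpleGraph V) (l : ℕ) (x : V → ℝ) : Prop :=
  (∀ v, 0 ≤ x v ∧ x v ≤ 1) ∧
  ∀ C : Finset V, (G.induce (C : Set V)).Connected → C.card = l + 1 →
    1 ≤ ∑ v ∈ C, x v

/-- Alternating path w.r.t. a subgraph `M`: a path whose edges at even positions
are outside `M` and at odd positions are inside `M`. -/
def AltPath (G : SimpleGraph V) (M : G.Subgraph) {u v : V} (p : G.Walk u v) : Prop :=
  p.IsPath ∧ ∀ i : Fin p.edges.length, (p.edges.get i ∈ M.edgeSet ↔ Odd i.val)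


def compSet (G : SimpleGraph V) (X : Set V) (v : V) : Set V := {u | ReachIn G X v u}

variable {G : SimpleGraph V} {X A : Set V} {u v w : V}

lemma ReachIn.left (h : ReachIn G X u v) : u ∈ X := h.1
lemma ReachIn.right (h : ReachIn G X u v) : v ∈ X := h.2.1

lemma reachIn_refl (hv : v ∈ X) : ReachIn G X v v := ⟨hv, hv, Reachable.refl _⟩

lemma ReachIn.symm (h : ReachIn G X u v) : ReachIn G X v u := by
  obtain ⟨h1, h2, h3⟩ := h; exact ⟨h2, h1, h3.symm⟩

lemma ReachIn.trans (h : ReachIn G X u v) (h' : ReachIn G X v w) : ReachIn G X u w := by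
  obtain ⟨h1, h2, h3⟩ := h; obtain ⟨h1', h2', h3'⟩ := h'
  exact ⟨h1, h2', h3.trans h3'⟩

lemma reachIn_of_adj (hu : u ∈ X) (hv : v ∈ X) (h : G.Adj u v) : ReachIn G X u v :=
  ⟨hu, hv, Adj.reachable (by simpa using h)⟩

lemma ReachIn.mono (hAX : A ⊆ X) (h : ReachIn G A u v) : ReachIn G X u v := by
  obtain ⟨h1, h2, h3⟩ := h
  exact ⟨hAX h1, hAX h2, by exact h3.map (G.induceHomOfLE hAX).toHom⟩

lemma ReachIn.closed (hcl : ∀ a ∈ A, ∀ b ∈ X, G.Adj a b → b ∈ A)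
    (h : ReachIn G X u v) (hu : u ∈ A) : ReachIn G A u v := by
  obtain ⟨h1, h2, h3⟩ := h
  obtain ⟨p⟩ := h3
  suffices H : ∀ (x y : X) (p : (G.induce X).Walk x y), (x : V) ∈ A → ReachIn G A x y by
    exact H _ _ p hu
  intro x y p
  induction p with
  | nil => exact fun hx => reachIn_refl hx
  | @cons a b c h q ih =>
      intro ha
      have hadj : G.Adj (a : V) (b : V) := by simpa using h
      have hb : (b : V) ∈ A := hcl _ ha _ b.2 hadj
      exact (reachIn_of_adj ha hb hadj).trans (ih hb)

lemma compSet_eq_of_closed (hAX : A ⊆ X) (hcl : ∀ a ∈ A, ∀ b ∈ X, G.Adj a b → b ∈ A)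
    (hv : v ∈ A) : compSet G X v = compSet G A v := by
  ext u
  exact ⟨fun h => h.closed hcl hv, fun h => h.mono hAX⟩

lemma mem_compSet_self (hv : v ∈ X) : v ∈ compSet G X v := reachIn_refl hv

lemma compSet_subset (G : SimpleGraph V) (X : Set V) (v : V) : compSet G X v ⊆ X :=
  fun _ h => h.right

lemma compSet_eq_of_mem (h : u ∈ compSet G X v) : compSet G X u = compSet G X v := by
  ext w
  exact ⟨fun h' => ReachIn.trans h h', fun h' => ReachIn.trans (ReachIn.symm h) h'⟩


def suppV (G : SimpleGraph V) (X : Set V) (c : (G.induce X).ConnectedComponent) : Set V :=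
  Subtype.val '' c.supp

variable {G : SimpleGraph V} {X A : Set V} {u v w : V}

lemma mem_suppV_iff {c : (G.induce X).ConnectedComponent} :
    u ∈ suppV G X c ↔ ∃ hu : u ∈ X, (G.induce X).connectedComponentMk ⟨u, hu⟩ = c := by
  constructor
  · rintro ⟨⟨u', hu'⟩, hm, rfl⟩
    exact ⟨hu', by simpa [ConnectedComponent.mem_supp_iff] using hm⟩
  · rintro ⟨hu, hm⟩
    exact ⟨⟨u, hu⟩, by simpa [ConnectedComponent.mem_supp_iff] using hm, rfl⟩

lemma suppV_mk (hv : v ∈ X) :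
    suppV G X ((G.induce X).connectedComponentMk ⟨v, hv⟩) = compSet G X v := by
  ext u
  rw [mem_suppV_iff]
  constructor
  · rintro ⟨hu, hm⟩
    exact ⟨hv, hu, ((ConnectedComponent.eq).1 hm).symm⟩
  · rintro ⟨_, hu, hr⟩
    exact ⟨hu, (ConnectedComponent.eq).2 hr.symm⟩

lemma card_supp_eq_ncard_suppV (c : (G.induce X).ConnectedComponent) :
    Nat.card c.supp = (suppV G X c).ncard := by
  rw [Nat.card_coe_set_eq, suppV, Set.ncard_image_of_injective _ Subtype.val_injective]

lemma suppV_nonempty (c : (G.induce X).ConnectedComponent) : (suppV G X c).Nonempty := by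
  obtain ⟨⟨v, hv⟩, hvc⟩ := c.exists_rep
  exact ⟨v, mem_suppV_iff.2 ⟨hv, hvc⟩⟩

lemma suppV_subset (c : (G.induce X).ConnectedComponent) : suppV G X c ⊆ X := by
  rintro u hu; exact (mem_suppV_iff.1 hu).1

lemma eq_of_mem_suppV {c c' : (G.induce X).ConnectedComponent}
    (h : u ∈ suppV G X c) (h' : u ∈ suppV G X c') : c = c' := by
  obtain ⟨hu, hm⟩ := mem_suppV_iff.1 h
  obtain ⟨hu', hm'⟩ := mem_suppV_iff.1 h'
  exact hm ▸ hm' ▸ rfl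

lemma reachIn_of_mem_suppV {c : (G.induce X).ConnectedComponent}
    (h : u ∈ suppV G X c) (h' : v ∈ suppV G X c) : ReachIn G X u v := by
  obtain ⟨hu, hm⟩ := mem_suppV_iff.1 h
  obtain ⟨hv, hm'⟩ := mem_suppV_iff.1 h'
  exact ⟨hu, hv, (ConnectedComponent.eq).1 (hm.trans hm'.symm)⟩

lemma suppV_eq_compSet {c : (G.induce X).ConnectedComponent} (h : v ∈ suppV G X c) :
    suppV G X c = compSet G X v := by
  obtain ⟨hv, hm⟩ := mem_suppV_iff.1 h
  rw [← hm, suppV_mk]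

lemma allCompsSize_iff {l : ℕ} :
    AllCompsSize G X l ↔ ∀ v, ∀ hv : v ∈ X, (compSet G X v).ncard = l := by
  constructor
  · intro h v hv
    rw [← suppV_mk hv, ← card_supp_eq_ncard_suppV]
    exact h _
  · intro h c
    obtain ⟨⟨v, hv⟩, hvc⟩ := c.exists_rep
    have hvc' : (G.induce X).connectedComponentMk ⟨v, hv⟩ = c := hvc
    rw [card_supp_eq_ncard_suppV, ← hvc', suppV_mk hv]
    exact h v hv

lemma ncard_biUnion_parts {β : Type*} [Fintype V] [Finite β] (D : Set β) (f : β → Set V)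
    (l : ℕ) (hd : D.PairwiseDisjoint f) (hc : ∀ c ∈ D, (f c).ncard = l) :
    (⋃ c ∈ D, f c).ncard = l * Nat.card D := by
  classical
  haveI := Fintype.ofFinite β
  have hD : D.Finite := Set.toFinite D
  have h1 : (⋃ c ∈ D, f c) = ↑(hD.toFinset.biUnion fun c => (f c).toFinset) := by
    ext x
    simp only [Set.mem_iUnion, Finset.coe_biUnion, Set.Finite.coe_toFinset, Set.mem_iUnion,
      Finset.mem_coe, Set.mem_toFinset]
  rw [h1, Set.ncard_coe_finset]
  rw [Finset.card_biUnion (fun x hx y hy hxy => Set.disjoint_toFinset.2 <|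
    hd (hD.mem_toFinset.1 hx) (hD.mem_toFinset.1 hy) hxy)]
  have h2 : ∀ c ∈ hD.toFinset, (f c).toFinset.card = l := by
    intro c hcD
    rw [← Set.ncard_eq_toFinset_card' (f c)]
    exact hc c (hD.mem_toFinset.1 hcD)
  rw [Finset.sum_congr rfl h2, Finset.sum_const, smul_eq_mul, mul_comm,
    Nat.card_coe_set_eq, Set.ncard_eq_toFinset_card' D, Set.Finite.toFinset_eq_toFinset]

lemma mem_suppV_mk {G : SimpleGraph V} {X : Set V} {v : V} (hv : v ∈ X) :
    v ∈ suppV G X ((G.induce X).connectedComponentMk ⟨v, hv⟩) := by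
  rw [suppV_mk hv]; exact mem_compSet_self hv

-- main helpers inserted above
theorem stmt0 [Fintype V] (G : SimpleGraph V) (l : ℕ) (hl : 1 ≤ l)
    (I J R : Set V) (hcrown : IsECOCCrown G l I J R)
    (hex : ∃ S : Set V, IsECOCSol G l S) :
    ∃ S' : Set V, IsECOCSol G l S' ∧ J ⊆ S' ∧ I ∩ S' = ∅ ∧
      ∀ S : Set V, IsECOCSol G l S → Nat.card S' ≤ Nat.card S := by
  classical
  obtain ⟨hpart, hIJ, hIR, hJR, hIcomp, hnoIR, M, hMinj, hMadj⟩ := hcrown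
  -- pick an optimal solution S
  obtain ⟨S, hS, hSmin⟩ : ∃ S : Set V, IsECOCSol G l S ∧
      ∀ S₁ : Set V, IsECOCSol G l S₁ → Nat.card S ≤ Nat.card S₁ := by
    obtain ⟨S₀, hS₀⟩ := hex
    obtain ⟨S, hS1, hS2⟩ := Finset.exists_min_image
      (Finset.univ.filter fun S : Set V => IsECOCSol G l S) (fun S => Nat.card S)
      ⟨S₀, by simp [hS₀]⟩
    exact ⟨S, (Finset.mem_filter.1 hS1).2, fun S₁ h₁ => hS2 S₁ (by simp [h₁])⟩
  -- basic facts
  have huniv : ∀ v : V, v ∈ I ∨ v ∈ J ∨ v ∈ R := by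
    intro v
    have hv : v ∈ I ∪ J ∪ R := hpart ▸ Set.mem_univ v
    rcases hv with (h | h) | h
    · exact Or.inl h
    · exact Or.inr (Or.inl h)
    · exact Or.inr (Or.inr h)
  have hdIJ : ∀ {a : V}, a ∈ I → a ∉ J := fun h => Set.disjoint_left.1 hIJ h
  have hdIR : ∀ {a : V}, a ∈ I → a ∉ R := fun h => Set.disjoint_left.1 hIR h
  have hdJR : ∀ {a : V}, a ∈ J → a ∉ R := fun h => Set.disjoint_left.1 hJR h
  -- the set of vertices whose component in G - S meets J
  set U : Set V := {v | ∃ j ∈ J, ReachIn G Sᶜ v j} with hU_def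
  set W : Set V := (I \ S) \ U with hW_def
  set S' : Set V := J ∪ ((S ∪ U) ∩ R) with hS'_def
  have hUS : U ⊆ Sᶜ := by rintro v ⟨j, hj, hr⟩; exact hr.left
  have hJU : ∀ j ∈ J, j ∈ Sᶜ → j ∈ U := fun j hj hjs => ⟨j, hj, reachIn_refl hjs⟩
  have hUreach : ∀ a b : V, ReachIn G Sᶜ a b → b ∈ U → a ∈ U := by
    rintro a b hr ⟨j, hj, hr'⟩
    exact ⟨j, hj, hr.trans hr'⟩
  have hsol : ∀ v ∈ Sᶜ, (compSet G Sᶜ v).ncard = l := allCompsSize_iff.1 hS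
  have hIl : ∀ v ∈ I, (compSet G I v).ncard = l := allCompsSize_iff.1 hIcomp
  -- the key structural lemma
  have hKey : ∀ v, v ∈ I → v ∈ Sᶜ → v ∉ U → compSet G Sᶜ v = compSet G I v := by
    intro v hvI hvS hvU
    have h1 : compSet G Sᶜ v = compSet G (Sᶜ \ U) v := by
      refine compSet_eq_of_closed Set.diff_subset ?_ ⟨hvS, hvU⟩
      rintro a ⟨haS, haU⟩ b hbS hab
      refine ⟨hbS, fun hbU => haU ?_⟩
      exact hUreach a b (reachIn_of_adj haS hbS hab) hbU
    have h2 : compSet G (Sᶜ \ U) v = compSet G (I ∩ (Sᶜ \ U)) v := by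
      refine compSet_eq_of_closed Set.inter_subset_right ?_ ⟨hvI, hvS, hvU⟩
      rintro a ⟨haI, haSU⟩ b ⟨hbS, hbU⟩ hab
      refine ⟨?_, hbS, hbU⟩
      rcases huniv b with hb | hb | hb
      · exact hb
      · exact absurd (hJU b hb hbS) hbU
      · exact absurd hab (hnoIR a haI b hb)
    have hsub : compSet G Sᶜ v ⊆ compSet G I v := by
      rw [h1, h2]
      exact fun u hu => hu.mono Set.inter_subset_left
    refine Set.eq_of_subset_of_ncard_le hsub ?_ (Set.toFinite _)
    rw [hsol v hvS, hIl v hvI]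
  refine ⟨S', ?_, Set.subset_union_left, ?_, ?_⟩
  · -- S' is a solution
    show AllCompsSize G S'ᶜ l
    rw [allCompsSize_iff]
    intro v hv
    have hv' : v ∉ S' := hv
    rcases huniv v with hvI | hvJ | hvR
    · -- v in I : component of v in G - S' is its component in G[I]
      have hIsub : I ⊆ S'ᶜ := by
        intro a ha
        simp only [hS'_def, Set.mem_compl_iff, Set.mem_union, Set.mem_inter_iff]
        rintro (h | ⟨_, h⟩)
        · exact hdIJ ha h
        · exact hdIR ha h
      have hIcl : ∀ a ∈ I, ∀ b ∈ S'ᶜ, G.Adj a b → b ∈ I := by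
        intro a ha b hb hab
        rcases huniv b with h | h | h
        · exact h
        · exact absurd (Set.mem_union_left _ h) hb
        · exact absurd hab (hnoIR a ha b h)
      rw [compSet_eq_of_closed hIsub hIcl hvI]
      exact hIl v hvI
    · -- v in J : impossible
      exact absurd (Set.mem_union_left _ hvJ) hv'
    · -- v in R
      have hvSU : v ∉ S ∪ U := fun h => hv' (Set.mem_union_right _ ⟨h, hvR⟩)
      have hvS : v ∈ Sᶜ := fun h => hvSU (Or.inl h)
      have hvU : v ∉ U := fun h => hvSU (Or.inr h)
      set R₀ : Set V := R \ (S ∪ U) with hR₀_def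
      have hvR₀ : v ∈ R₀ := ⟨hvR, hvSU⟩
      have hR₀S' : R₀ ⊆ S'ᶜ := by
        rintro a ⟨haR, haSU⟩
        simp only [hS'_def, Set.mem_compl_iff, Set.mem_union, Set.mem_inter_iff]
        rintro (h | ⟨h, _⟩)
        · exact hdJR h haR
        · exact haSU h
      have h1 : compSet G S'ᶜ v = compSet G R₀ v := by
        refine compSet_eq_of_closed hR₀S' ?_ hvR₀
        intro a ha b hb hab
        rcases huniv b with h | h | h
        · exact absurd hab.symm (hnoIR b h a ha.1)
        · exact absurd (Set.mem_union_left _ h) hb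
        · refine ⟨h, ?_⟩
          intro hbSU
          exact hb (Set.mem_union_right _ ⟨hbSU, h⟩)
      have h2 : compSet G Sᶜ v = compSet G R₀ v := by
        refine compSet_eq_of_closed (fun a ha => fun h => ha.2 (Or.inl h)) ?_ hvR₀
        rintro a ⟨haR, haSU⟩ b hbS hab
        rcases huniv b with h | h | h
        · exact absurd hab.symm (hnoIR b h a haR)
        · exact absurd (hUreach a b (reachIn_of_adj (fun h' => haSU (Or.inl h')) hbS hab)
            (hJU b h hbS)) (fun h' => haSU (Or.inr h'))
        · refine ⟨h, ?_⟩
          rintro (h' | h')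
          · exact hbS h'
          · exact haSU (Or.inr (hUreach a b (reachIn_of_adj
              (fun h'' => haSU (Or.inl h'')) hbS hab) h'))
      rw [h1, ← h2]
      exact hsol v hvS
  · -- I ∩ S' = ∅
    ext a
    simp only [hS'_def, Set.mem_inter_iff, Set.mem_union, Set.mem_inter_iff,
      Set.mem_empty_iff_false, iff_false, not_and]
    rintro ha (h | ⟨_, h⟩)
    · exact hdIJ ha h
    · exact hdIR ha h
  · -- minimality
    intro S₁ hS₁
    refine le_trans ?_ (hSmin S₁ hS₁)
    -- counting
    have hsuppl : ∀ c : (G.induce Sᶜ).ConnectedComponent, (suppV G Sᶜ c).ncard = l := by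
      intro c; rw [← card_supp_eq_ncard_suppV]; exact hS c
    have hsupplI : ∀ Q : (G.induce I).ConnectedComponent, (suppV G I Q).ncard = l := by
      intro Q; rw [← card_supp_eq_ncard_suppV]; exact hIcomp Q
    set D' : Set ((G.induce Sᶜ).ConnectedComponent) :=
      {c | (suppV G Sᶜ c ∩ (I ∪ J)).Nonempty} with hD'_def
    have hUW : U ∪ W = ⋃ c ∈ D', suppV G Sᶜ c := by
      ext v
      simp only [Set.mem_union, Set.mem_iUnion, exists_prop]
      constructor
      · rintro (hv | hv)
        · obtain ⟨j, hjJ, hr⟩ := hv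
          have hvS : v ∈ Sᶜ := hr.left
          refine ⟨(G.induce Sᶜ).connectedComponentMk ⟨v, hvS⟩,
            ⟨j, ?_, Or.inr hjJ⟩, mem_suppV_mk hvS⟩
          rw [suppV_mk hvS]; exact hr
        · obtain ⟨⟨hvI, hvS0⟩, hvU⟩ := hv
          have hvS : v ∈ Sᶜ := hvS0
          refine ⟨(G.induce Sᶜ).connectedComponentMk ⟨v, hvS⟩,
            ⟨v, ?_, Or.inl hvI⟩, mem_suppV_mk hvS⟩
          exact mem_suppV_mk hvS
      · rintro ⟨c, hcD, hvc⟩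
        by_cases hJc : (suppV G Sᶜ c ∩ J).Nonempty
        · obtain ⟨j, hjc, hjJ⟩ := hJc
          exact Or.inl ⟨j, hjJ, reachIn_of_mem_suppV hvc hjc⟩
        · obtain ⟨x, hxc, hxIJ⟩ := hcD
          have hxI : x ∈ I := by
            rcases hxIJ with h | h
            · exact h
            · exact absurd ⟨x, hxc, h⟩ hJc
          have hxS : x ∈ Sᶜ := suppV_subset c hxc
          have hcx : suppV G Sᶜ c = compSet G Sᶜ x := suppV_eq_compSet hxc
          have hxU : x ∉ U := by
            rintro ⟨j, hjJ, hr⟩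
            exact hJc ⟨j, by rw [hcx]; exact hr, hjJ⟩
          have hKx := hKey x hxI hxS hxU
          have hvI : v ∈ I := (compSet_subset G I x) (by rw [← hKx, ← hcx]; exact hvc)
          have hvS : v ∈ Sᶜ := suppV_subset c hvc
          have hvU : v ∉ U := by
            rintro ⟨j, hjJ, hr⟩
            have hxv : ReachIn G Sᶜ x v := by rw [hcx] at hvc; exact hvc
            exact hJc ⟨j, by rw [hcx]; exact hxv.trans hr, hjJ⟩
          exact Or.inr ⟨⟨hvI, hvS⟩, hvU⟩
    have hdisjsupp : D'.PairwiseDisjoint (suppV G Sᶜ) := by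
      intro c hc c' hc' hne
      exact Set.disjoint_left.2 fun {x} hx hx' => hne (eq_of_mem_suppV hx hx')
    have hUWcard : (U ∪ W).ncard = l * Nat.card D' := by
      rw [hUW]
      exact ncard_biUnion_parts D' _ l hdisjsupp (fun c _ => hsuppl c)
    have hIunion : I = ⋃ Q ∈ (Set.univ : Set ((G.induce I).ConnectedComponent)), suppV G I Q := by
      ext v
      simp only [Set.mem_iUnion, Set.mem_univ, exists_prop, true_and]
      constructor
      · intro hv
        exact ⟨(G.induce I).connectedComponentMk ⟨v, hv⟩, mem_suppV_mk hv⟩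
      · rintro ⟨Q, hQ⟩
        exact suppV_subset Q hQ
    have hIcard : I.ncard = l * Nat.card (Set.univ : Set ((G.induce I).ConnectedComponent)) := by
      have hd : (Set.univ : Set ((G.induce I).ConnectedComponent)).PairwiseDisjoint (suppV G I) := by
        intro c hc c' hc' hne
        exact Set.disjoint_left.2 fun {x} hx hx' => hne (eq_of_mem_suppV hx hx')
      have := ncard_biUnion_parts (Set.univ : Set ((G.induce I).ConnectedComponent))
        (suppV G I) l hd (fun Q _ => hsupplI Q)
      rw [← this]
      exact congrArg Set.ncard hIunion
    -- the injection
    have hexQ : ∀ c : ↥D', ∃ Q : (G.induce I).ConnectedComponent,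
        (suppV G I Q = suppV G Sᶜ c.1) ∨
        (∃ j, ∃ hjJ : j ∈ J, j ∈ suppV G Sᶜ c.1 ∧ Q = M ⟨j, hjJ⟩ ∧
          ∃ u ∈ suppV G I Q, G.Adj u j) := by
      rintro ⟨c, hc⟩
      by_cases hJc : (suppV G Sᶜ c ∩ J).Nonempty
      · obtain ⟨j, hjc, hjJ⟩ := hJc
        refine ⟨M ⟨j, hjJ⟩, Or.inr ⟨j, hjJ, hjc, rfl, ?_⟩⟩
        obtain ⟨u, hu, hadj⟩ := hMadj ⟨j, hjJ⟩
        exact ⟨u, ⟨u, hu, rfl⟩, hadj⟩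
      · obtain ⟨x, hxc, hxIJ⟩ := hc
        have hxI : x ∈ I := by
          rcases hxIJ with h | h
          · exact h
          · exact absurd ⟨x, hxc, h⟩ hJc
        have hxS : x ∈ Sᶜ := suppV_subset c hxc
        have hcx : suppV G Sᶜ c = compSet G Sᶜ x := suppV_eq_compSet hxc
        have hxU : x ∉ U := by
          rintro ⟨j, hjJ, hr⟩
          exact hJc ⟨j, by rw [hcx]; exact hr, hjJ⟩
        refine ⟨(G.induce I).connectedComponentMk ⟨x, hxI⟩, Or.inl ?_⟩
        rw [suppV_mk hxI, ← hKey x hxI hxS hxU, ← hcx]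
    choose Φ hΦ using hexQ
    have hΦinj : Function.Injective Φ := by
      intro c₁ c₂ heq
      have key : ∃ v, v ∈ suppV G Sᶜ c₁.1 ∧ v ∈ suppV G Sᶜ c₂.1 := by
        rcases hΦ c₁ with h1 | ⟨j1, hj1J, hj1c, hQ1, u1, hu1, hadj1⟩ <;>
          rcases hΦ c₂ with h2 | ⟨j2, hj2J, hj2c, hQ2, u2, hu2, hadj2⟩
        · obtain ⟨v, hv⟩ := suppV_nonempty c₁.1
          refine ⟨v, hv, ?_⟩
          rw [← h2, ← heq, h1]; exact hv
        · -- c₁ I-type, c₂ J-type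
          have hu2' : u2 ∈ suppV G Sᶜ c₁.1 := by
            rw [← h1, heq]; exact hu2
          have hadjS : ReachIn G Sᶜ u2 j2 :=
            reachIn_of_adj (suppV_subset _ hu2') (suppV_subset _ hj2c) hadj2
          refine ⟨j2, ?_, hj2c⟩
          rw [suppV_eq_compSet hu2']; exact hadjS
        · -- c₁ J-type, c₂ I-type
          have hu1' : u1 ∈ suppV G Sᶜ c₂.1 := by
            rw [← h2, ← heq]; exact hu1
          have hadjS : ReachIn G Sᶜ u1 j1 :=
            reachIn_of_adj (suppV_subset _ hu1') (suppV_subset _ hj1c) hadj1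
          refine ⟨j1, hj1c, ?_⟩
          rw [suppV_eq_compSet hu1']; exact hadjS
        · -- both J-type
          have hM : M ⟨j1, hj1J⟩ = M ⟨j2, hj2J⟩ := by rw [← hQ1, ← hQ2, heq]
          have hj12 : j1 = j2 := congrArg Subtype.val (hMinj hM)
          subst hj12
          exact ⟨j1, hj1c, hj2c⟩
      obtain ⟨v, hv1, hv2⟩ := key
      exact Subtype.ext (eq_of_mem_suppV hv1 hv2)
    have hcard_le : Nat.card ↥D' ≤
        Nat.card (Set.univ : Set ((G.induce I).ConnectedComponent)) := by
      refine Nat.card_le_card_of_injective (fun c => ⟨Φ c, Set.mem_univ _⟩) ?_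
      intro a b hab
      exact hΦinj (by simpa using hab)
    have hUWI : (U ∪ W).ncard ≤ I.ncard := by
      rw [hUWcard, hIcard]
      exact Nat.mul_le_mul_left l hcard_le
    -- decompositions
    have hsplit3 : ∀ T : Set V, T.ncard = (T ∩ I).ncard + (T ∩ J).ncard + (T ∩ R).ncard := by
      intro T
      have h1 : T = ((T ∩ I) ∪ (T ∩ J)) ∪ (T ∩ R) := by
        ext a
        simp only [Set.mem_union, Set.mem_inter_iff]
        constructor
        · intro ha
          rcases huniv a with h | h | h
          · exact Or.inl (Or.inl ⟨ha, h⟩)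
          · exact Or.inl (Or.inr ⟨ha, h⟩)
          · exact Or.inr ⟨ha, h⟩
        · rintro ((⟨h, _⟩ | ⟨h, _⟩) | ⟨h, _⟩) <;> exact h
      rw [show (T ∩ I).ncard + (T ∩ J).ncard + (T ∩ R).ncard
          = ((T ∩ I).ncard + (T ∩ J).ncard) + (T ∩ R).ncard from rfl]
      rw [← Set.ncard_union_eq (hIJ.mono Set.inter_subset_right Set.inter_subset_right)
        (Set.toFinite _) (Set.toFinite _)]
      rw [← Set.ncard_union_eq ?_ (Set.toFinite _) (Set.toFinite _)]
      · exact congrArg Set.ncard h1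
      · refine Set.disjoint_union_left.2 ⟨?_, ?_⟩
        · exact hIR.mono Set.inter_subset_right Set.inter_subset_right
        · exact hJR.mono Set.inter_subset_right Set.inter_subset_right
    have hdisjUW : Disjoint U W := by
      refine Set.disjoint_left.2 fun {a} haU haW => haW.2 haU
    have hUWdecomp : (U ∪ W).ncard =
        ((U ∩ I).ncard + (U ∩ J).ncard + (U ∩ R).ncard) + W.ncard := by
      rw [Set.ncard_union_eq hdisjUW (Set.toFinite _) (Set.toFinite _), hsplit3 U]
    have hIdecomp : I.ncard = (S ∩ I).ncard + (U ∩ I).ncard + W.ncard := by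
      have h1 : I = ((S ∩ I) ∪ (U ∩ I)) ∪ W := by
        ext a
        simp only [Set.mem_union, Set.mem_inter_iff, hW_def, Set.mem_diff]
        constructor
        · intro ha
          by_cases haS : a ∈ S
          · exact Or.inl (Or.inl ⟨haS, ha⟩)
          · by_cases haU : a ∈ U
            · exact Or.inl (Or.inr ⟨haU, ha⟩)
            · exact Or.inr ⟨⟨ha, haS⟩, haU⟩
        · rintro ((⟨_, h⟩ | ⟨_, h⟩) | ⟨⟨h, _⟩, _⟩) <;> exact h
      have d2 : Disjoint (S ∩ I) (U ∩ I) :=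
        Set.disjoint_left.2 fun {a} ha haU => hUS haU.1 ha.1
      have d1 : Disjoint ((S ∩ I) ∪ (U ∩ I)) W := by
        refine Set.disjoint_union_left.2 ⟨?_, ?_⟩
        · exact Set.disjoint_left.2 fun {a} ha haW => haW.1.2 ha.1
        · exact Set.disjoint_left.2 fun {a} ha haW => haW.2 ha.1
      have h2 : (((S ∩ I) ∪ (U ∩ I)) ∪ W).ncard = (S ∩ I).ncard + (U ∩ I).ncard + W.ncard := by
        rw [Set.ncard_union_eq d1 (Set.toFinite _) (Set.toFinite _),
          Set.ncard_union_eq d2 (Set.toFinite _) (Set.toFinite _)]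
      rw [← h2]
      exact congrArg Set.ncard h1
    have hS'decomp : S'.ncard = J.ncard + ((S ∩ R).ncard + (U ∩ R).ncard) := by
      have h1 : S' = J ∪ ((S ∩ R) ∪ (U ∩ R)) := by
        rw [hS'_def, Set.union_inter_distrib_right]
      have d2 : Disjoint (S ∩ R) (U ∩ R) :=
        Set.disjoint_left.2 fun {a} ha haU => hUS haU.1 ha.1
      have d1 : Disjoint J ((S ∩ R) ∪ (U ∩ R)) := by
        refine Set.disjoint_union_right.2 ⟨?_, ?_⟩
        · exact hJR.mono_right Set.inter_subset_right
        · exact hJR.mono_right Set.inter_subset_right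
      rw [h1, Set.ncard_union_eq d1 (Set.toFinite _) (Set.toFinite _),
        Set.ncard_union_eq d2 (Set.toFinite _) (Set.toFinite _)]
    have hJdecomp : J.ncard = (S ∩ J).ncard + (U ∩ J).ncard := by
      have h1 : J = (S ∩ J) ∪ (U ∩ J) := by
        ext a
        simp only [Set.mem_union, Set.mem_inter_iff]
        constructor
        · intro ha
          by_cases haS : a ∈ S
          · exact Or.inl ⟨haS, ha⟩
          · exact Or.inr ⟨hJU a ha haS, ha⟩
        · rintro (⟨_, h⟩ | ⟨_, h⟩) <;> exact h
      have d1 : Disjoint (S ∩ J) (U ∩ J) :=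
        Set.disjoint_left.2 fun {a} ha haU => hUS haU.1 ha.1
      have h2 : ((S ∩ J) ∪ (U ∩ J)).ncard = (S ∩ J).ncard + (U ∩ J).ncard :=
        Set.ncard_union_eq d1 (Set.toFinite _) (Set.toFinite _)
      rw [← h2]
      exact congrArg Set.ncard h1
    have hSdecomp : S.ncard = (S ∩ I).ncard + (S ∩ J).ncard + (S ∩ R).ncard := hsplit3 S
    rw [Nat.card_coe_set_eq, Nat.card_coe_set_eq]
    omega
end

section
/- Let G be a graph, I ⊆ V(G) nonempty with J = N(I), and let 𝒞 be the set of connected components of G[I]. If every component in 𝒞 has exactly l vertices and |𝒞| ≥ |J| + 1, then there exist nonempty I' ⊆ I and J' ⊆ J such that (I', J', V(G) \ (I' ∪ J')) is a strict ECOC crown decomposition of G, i.e., an ECOC crown decomposition in which the number of connected components of G[I'] is at least |J'| + 1. -/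
open SimpleGraph

variable {V : Type*}

namespace CrownAux

variable {G : SimpleGraph V} {X Y : Set V}

lemma closed_reach (hYX : Y ⊆ X)
    (hcl : ∀ ⦃u v : V⦄, u ∈ Y → v ∈ X → G.Adj u v → v ∈ Y)
    {u v : X} (w : (G.induce X).Walk u v) :
    ∀ hu : (u : V) ∈ Y,
      ∃ hv : (v : V) ∈ Y, (G.induce Y).Reachable ⟨u, hu⟩ ⟨v, hv⟩ := by
  induction w with
  | nil => exact fun hu => ⟨hu, Reachable.refl _⟩
  | @cons a b c hadj p ih =>
    intro hu
    have hb : (b : V) ∈ Y := hcl hu b.2 hadj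
    obtain ⟨hv, hr⟩ := ih hb
    exact ⟨hv, (Adj.reachable (show (G.induce Y).Adj ⟨a, hu⟩ ⟨b, hb⟩ from hadj)).trans hr⟩

/-- The map on components induced by an inclusion of vertex sets. -/
def compMap (G : SimpleGraph V) (hYX : Y ⊆ X) :
    (G.induce Y).ConnectedComponent → (G.induce X).ConnectedComponent :=
  ConnectedComponent.map ⟨Set.inclusion hYX, fun {_ _} h => h⟩

lemma compMap_mk (hYX : Y ⊆ X) (v : Y) :
    compMap G hYX ((G.induce Y).connectedComponentMk v) =
      (G.induce X).connectedComponentMk ⟨v, hYX v.2⟩ := rfl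

lemma compMap_inj (hYX : Y ⊆ X)
    (hcl : ∀ ⦃u v : V⦄, u ∈ Y → v ∈ X → G.Adj u v → v ∈ Y) :
    Function.Injective (compMap G hYX) := by
  intro c d
  refine ConnectedComponent.ind₂ (fun u v h => ?_) c d
  rw [compMap_mk, compMap_mk] at h
  obtain ⟨w⟩ := ConnectedComponent.exact h
  obtain ⟨hv, hr⟩ := closed_reach hYX hcl w u.2
  exact ConnectedComponent.sound hr

lemma compMap_supp (hYX : Y ⊆ X)
    (hcl : ∀ ⦃u v : V⦄, u ∈ Y → v ∈ X → G.Adj u v → v ∈ Y)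
    (c : (G.induce Y).ConnectedComponent) :
    Subtype.val '' (compMap G hYX c).supp = Subtype.val '' c.supp := by
  refine ConnectedComponent.ind (fun u => ?_) c
  ext x
  constructor
  · rintro ⟨w, hw, rfl⟩
    rw [ConnectedComponent.mem_supp_iff, compMap_mk] at hw
    obtain ⟨wk⟩ := (ConnectedComponent.exact hw).symm
    obtain ⟨hwY, hr⟩ := closed_reach hYX hcl wk u.2
    refine ⟨⟨w.1, hwY⟩, ?_, rfl⟩
    rw [ConnectedComponent.mem_supp_iff]
    exact (ConnectedComponent.sound hr).symm
  · rintro ⟨w, hw, rfl⟩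
    rw [ConnectedComponent.mem_supp_iff] at hw
    refine ⟨⟨w.1, hYX w.2⟩, ?_, rfl⟩
    rw [ConnectedComponent.mem_supp_iff, ← compMap_mk hYX w, hw]

lemma compMap_card_supp (hYX : Y ⊆ X)
    (hcl : ∀ ⦃u v : V⦄, u ∈ Y → v ∈ X → G.Adj u v → v ∈ Y)
    (c : (G.induce Y).ConnectedComponent) :
    Nat.card (compMap G hYX c).supp = Nat.card c.supp := by
  have h := compMap_supp hYX hcl c
  have h1 := Set.ncard_image_of_injective (compMap G hYX c).supp Subtype.val_injective
  have h2 := Set.ncard_image_of_injective c.supp Subtype.val_injective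
  rw [Nat.card_coe_set_eq, Nat.card_coe_set_eq, ← h1, ← h2, h]

variable (G) in
/-- The union of the components of `G.induce X` satisfying `P`. -/
def selSet (X : Set V) (P : (G.induce X).ConnectedComponent → Prop) : Set V :=
  {v | ∃ h : v ∈ X, P ((G.induce X).connectedComponentMk ⟨v, h⟩)}

variable {P : (G.induce X).ConnectedComponent → Prop}

lemma selSet_subset : selSet G X P ⊆ X := fun _ h => h.1

lemma selSet_closed :
    ∀ ⦃u v : V⦄, u ∈ selSet G X P → v ∈ X → G.Adj u v → v ∈ selSet G X P := by
  rintro u v ⟨hu, hP⟩ hv hadj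
  refine ⟨hv, ?_⟩
  have : (G.induce X).Adj ⟨u, hu⟩ ⟨v, hv⟩ := hadj
  rwa [← ConnectedComponent.connectedComponentMk_eq_of_adj this]

lemma selSet_range :
    Set.range (compMap G (selSet_subset (P := P))) = {c | P c} := by
  ext c
  constructor
  · rintro ⟨d, rfl⟩
    refine ConnectedComponent.ind (fun u => ?_) d
    rw [compMap_mk]
    obtain ⟨hX, hP⟩ := u.2
    simpa using hP
  · intro hP
    obtain ⟨w, hw'⟩ := c.exists_rep
    have hw : (G.induce X).connectedComponentMk w = c := hw'
    have hwY : (w : V) ∈ selSet G X P := ⟨w.2, by rw [Subtype.coe_eta, hw]; exact hP⟩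
    refine ⟨(G.induce (selSet G X P)).connectedComponentMk ⟨w, hwY⟩, ?_⟩
    rw [compMap_mk, Subtype.coe_eta, hw]

lemma selSet_card_comps :
    Nat.card ((G.induce (selSet G X P)).ConnectedComponent) = Nat.card {c | P c} := by
  rw [← selSet_range (P := P), Nat.card_range_of_injective (compMap_inj _ selSet_closed)]

lemma selSet_allCompsSize {l : ℕ} (hsz : AllCompsSize G X l) :
    AllCompsSize G (selSet G X P) l := fun c => by
  rw [← compMap_card_supp (selSet_subset (P := P)) selSet_closed c]
  exact hsz _

end CrownAux

theorem core [Fintype V] (G : SimpleGraph V) (l : ℕ) :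
    ∀ n : ℕ, ∀ I : Set V, Nat.card I ≤ n → I.Nonempty → AllCompsSize G I l →
      Nat.card (nbhd G I) + 1 ≤ Nat.card ((G.induce I).ConnectedComponent) →
      ∃ I' J' : Set V, I'.Nonempty ∧ I' ⊆ I ∧ J' ⊆ nbhd G I ∧
        IsStrictECOCCrown G l I' J' (I' ∪ J')ᶜ := by
  intro n
  induction n using Nat.strong_induction_on with
  | _ n ih =>
  intro I hn hI hsz hcount
  classical
  haveI : Fintype ((G.induce I).ConnectedComponent) := Fintype.ofFinite _
  set J := nbhd G I with hJdef
  set t : J → Finset ((G.induce I).ConnectedComponent) :=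
    fun x => Finset.univ.filter (fun c => ∃ u ∈ c.supp, G.Adj u.1 x.1) with ht_def
  by_cases hhall : ∀ s : Finset J, s.card ≤ (s.biUnion t).card
  · obtain ⟨f, hfinj, hf⟩ := (Finset.all_card_le_biUnion_card_iff_exists_injective t).mp hhall
    refine ⟨I, J, hI, subset_rfl, subset_rfl, ?_, hI, hcount⟩
    refine ⟨Set.union_compl_self _, ?_, ?_, ?_, hsz, ?_, f, hfinj, ?_⟩
    · exact Set.disjoint_left.mpr fun a ha hJ => hJ.1 ha
    · exact Set.disjoint_left.mpr fun a ha h => h (Or.inl ha)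
    · exact Set.disjoint_left.mpr fun a ha h => h (Or.inr ha)
    · intro u hu v hv hadj
      exact hv (Or.inr ⟨fun hvI => hv (Or.inl hvI), u, hu, hadj⟩)
    · intro x
      have hfx := hf x
      simp only [ht_def, Finset.mem_filter] at hfx
      exact hfx.2
  · push_neg at hhall
    obtain ⟨s, hs⟩ := hhall
    set B := s.biUnion t with hBdef
    set P : (G.induce I).ConnectedComponent → Prop := fun c => c ∉ B with hPdef
    set Y := CrownAux.selSet G I P with hYdef
    have hYI : Y ⊆ I := CrownAux.selSet_subset
    -- B is nonempty
    have hsne : s.Nonempty := Finset.card_pos.mp (lt_of_le_of_lt (Nat.zero_le _) hs)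
    have hBne : 1 ≤ B.card := by
      obtain ⟨x, hx⟩ := hsne
      obtain ⟨hxI, u, hu, hadj⟩ := x.2
      have hct : (G.induce I).connectedComponentMk ⟨u, hu⟩ ∈ t x := by
        simp only [ht_def, Finset.mem_filter]
        refine ⟨Finset.mem_univ _, ⟨u, hu⟩, ?_, hadj⟩
        exact (ConnectedComponent.mem_supp_iff _ _).mpr rfl
      exact Finset.card_pos.mpr ⟨_, Finset.mem_biUnion.mpr ⟨x, hx, hct⟩⟩
    -- components of Y
    have hcompY : Nat.card ((G.induce Y).ConnectedComponent) = Bᶜ.card := by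
      rw [hYdef, CrownAux.selSet_card_comps]
      have : {c | P c} = (Bᶜ : Finset _) := by
        ext c; simp [hPdef]
      rw [this, Nat.card_coe_set_eq, Set.ncard_coe_finset]
    -- neighborhood of Y
    have hSval : (Subtype.val '' (↑s : Set J)) ⊆ J := by
      rintro _ ⟨x, _, rfl⟩; exact x.2
    have hnbY : nbhd G Y ⊆ J \ (Subtype.val '' (↑s : Set J)) := by
      rintro v ⟨hvY, u, huY, hadj⟩
      have hvI : v ∉ I := fun hvI => hvY (CrownAux.selSet_closed huY hvI hadj)
      obtain ⟨huI, hPu⟩ := huY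
      have hvJ : v ∈ J := ⟨hvI, u, huI, hadj⟩
      refine ⟨hvJ, ?_⟩
      rintro ⟨x, hxs, rfl⟩
      apply hPu
      refine Finset.mem_biUnion.mpr ⟨x, hxs, ?_⟩
      simp only [ht_def, Finset.mem_filter]
      refine ⟨Finset.mem_univ _, ⟨u, huI⟩, ?_, hadj⟩
      exact (ConnectedComponent.mem_supp_iff _ _).mpr rfl
    -- cardinality facts
    haveI : Fintype J := Fintype.ofFinite _
    have hba : s.card ≤ Nat.card J := by
      rw [Nat.card_eq_fintype_card]; exact Finset.card_le_univ s
    have hd : Nat.card J + 1 ≤ Fintype.card ((G.induce I).ConnectedComponent) := by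
      rwa [← Nat.card_eq_fintype_card]
    have he : Bᶜ.card = Fintype.card ((G.induce I).ConnectedComponent) - B.card :=
      Finset.card_compl B
    have hcd : B.card ≤ Fintype.card ((G.induce I).ConnectedComponent) :=
      Finset.card_le_univ B
    have hfb : Nat.card (nbhd G Y) ≤ Nat.card J - s.card := by
      have h1 : Nat.card (nbhd G Y) ≤ (J \ (Subtype.val '' (↑s : Set J))).ncard := by
        rw [Nat.card_coe_set_eq]
        exact Set.ncard_le_ncard hnbY (Set.toFinite _)
      have h2 : (J \ (Subtype.val '' (↑s : Set J))).ncard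
          = J.ncard - (Subtype.val '' (↑s : Set J)).ncard :=
        Set.ncard_diff hSval (Set.toFinite _)
      have h3 : (Subtype.val '' (↑s : Set J)).ncard = s.card := by
        rw [Set.ncard_image_of_injective _ Subtype.val_injective, Set.ncard_coe_finset]
      rw [h2, h3, ← Nat.card_coe_set_eq] at h1
      exact h1
    have hcountY : Nat.card (nbhd G Y) + 1 ≤ Nat.card ((G.induce Y).ConnectedComponent) := by
      rw [hcompY]; omega
    -- Y nonempty
    have hYne : Y.Nonempty := by
      have hpos : 0 < Nat.card ((G.induce Y).ConnectedComponent) := by omega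
      obtain ⟨c⟩ := (Nat.card_pos_iff.mp hpos).1
      obtain ⟨w, _⟩ := c.exists_rep
      exact ⟨w.1, w.2⟩
    -- Y strictly smaller than I
    have hYlt : Nat.card Y < Nat.card I := by
      obtain ⟨c₀, hc₀⟩ := Finset.card_pos.mp hBne
      obtain ⟨w, hw'⟩ := c₀.exists_rep
      have hw : (G.induce I).connectedComponentMk w = c₀ := hw'
      have hwY : (w : V) ∉ Y := by
        rintro ⟨h, hP⟩
        exact hP (by rw [Subtype.coe_eta, hw]; exact hc₀)
      rw [Nat.card_coe_set_eq, Nat.card_coe_set_eq]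
      exact Set.ncard_lt_ncard ⟨hYI, fun hIY => hwY (hIY w.2)⟩ (Set.toFinite _)
    -- AllCompsSize for Y
    have hszY : AllCompsSize G Y l := CrownAux.selSet_allCompsSize hsz
    obtain ⟨I', J', h1, h2, h3, h4⟩ :=
      ih (Nat.card Y) (lt_of_lt_of_le hYlt hn) Y le_rfl hYne hszY hcountY
    exact ⟨I', J', h1, h2.trans hYI, fun v hv => ((hnbY (h3 hv)).1 : v ∈ J), h4⟩

theorem stmt2 [Fintype V] (G : SimpleGraph V) (l : ℕ) (hl : 1 ≤ l)
    (I : Set V) (hI : I.Nonempty)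
    (hsz : AllCompsSize G I l)
    (hcount : Nat.card (nbhd G I) + 1 ≤ Nat.card ((G.induce I).ConnectedComponent)) :
    ∃ I' J' : Set V, I'.Nonempty ∧ I' ⊆ I ∧ J' ⊆ nbhd G I ∧
      IsStrictECOCCrown G l I' J' (I' ∪ J')ᶜ := by
  exact core G l (Nat.card I) I le_rfl hI hsz hcount
end

section
/- Let G be a graph on at least (l+1)k + l vertices that has an l-ECOC solution S of size at most k, and suppose every connected component of G has more than l vertices. Then the number of connected components of G − S is at least |S| + 1, and consequently G admits a strict ECOC crown decomposition. -/
open SimpleGraph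

variable {V : Type*}

section Aux

variable {G : SimpleGraph V}

/-- Transfer a walk in an induced subgraph to a larger induced subgraph. -/
def walkTransfer {A B : Set V} (hAB : A ⊆ B) :
    ∀ {u v : ↥A}, (G.induce A).Walk u v →
      (G.induce B).Walk ⟨↑u, hAB u.2⟩ ⟨↑v, hAB v.2⟩
  | _, _, SimpleGraph.Walk.nil => SimpleGraph.Walk.nil
  | _, _, SimpleGraph.Walk.cons h p =>
      SimpleGraph.Walk.cons (by simpa using h) (walkTransfer hAB p)

/-- Restrict a walk in an induced subgraph to a smaller adjacency-closed set. -/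
lemma walkRestrict {B Ic : Set V}
    (hclosed : ∀ x y : ↥B, (G.induce B).Adj x y → ↑x ∈ Ic → ↑y ∈ Ic)
    {u v : ↥B} (p : (G.induce B).Walk u v) : ∀ hu : ↑u ∈ Ic,
      ∃ hv : ↑v ∈ Ic, (G.induce Ic).Reachable ⟨↑u, hu⟩ ⟨↑v, hv⟩ := by
  induction p with
  | nil => exact fun hu => ⟨hu, SimpleGraph.Reachable.refl _⟩
  | cons h p ih =>
      intro hu
      have hw := hclosed _ _ h hu
      obtain ⟨hv, hr⟩ := ih hw
      exact ⟨hv, SimpleGraph.Reachable.trans (SimpleGraph.Adj.reachable (by simpa using h)) hr⟩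

lemma card_eq_card_comps_mul [Fintype V] (X : Set V) (l : ℕ)
    (h : ∀ c : (G.induce X).ConnectedComponent, Nat.card c.supp = l) :
    Nat.card ↥X = Nat.card ((G.induce X).ConnectedComponent) * l := by
  classical
  haveI : Fintype ((G.induce X).ConnectedComponent) := Fintype.ofFinite _
  rw [Nat.card_eq_fintype_card, Nat.card_eq_fintype_card]
  rw [← Fintype.card_congr (Equiv.sigmaFiberEquiv ((G.induce X).connectedComponentMk)),
    Fintype.card_sigma]
  have : ∀ c : (G.induce X).ConnectedComponent,
      Fintype.card {v : ↥X // (G.induce X).connectedComponentMk v = c} = l := by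
    intro c
    rw [Fintype.card_eq_nat_card]
    exact h c
  simp only [this, Finset.sum_const, Finset.card_univ, smul_eq_mul]

end Aux

theorem stmt5 [Fintype V] (G : SimpleGraph V) (l k : ℕ) (hl : 1 ≤ l)
    (hn : (l + 1) * k + l ≤ Fintype.card V)
    (S : Set V) (hS : IsECOCSol G l S) (hk : Nat.card S ≤ k)
    (hcomp : ∀ c : G.ConnectedComponent, l < Nat.card c.supp) :
    Nat.card S + 1 ≤ Nat.card ((G.induce Sᶜ).ConnectedComponent) ∧
    ∃ I J R : Set V, IsStrictECOCCrown G l I J R := by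
  classical
  have hS' : ∀ c : (G.induce Sᶜ).ConnectedComponent, Nat.card c.supp = l := hS
  haveI : Fintype ((G.induce Sᶜ).ConnectedComponent) := Fintype.ofFinite _
  have hcount : Nat.card ↥Sᶜ = Nat.card ((G.induce Sᶜ).ConnectedComponent) * l :=
    card_eq_card_comps_mul Sᶜ l hS'
  have hsplit : Nat.card ↥S + Nat.card ↥Sᶜ = Fintype.card V := by
    rw [Nat.card_eq_fintype_card, Nat.card_eq_fintype_card, Fintype.card_compl_set]
    have h2 : Fintype.card ↥S ≤ Fintype.card V :=
      Fintype.card_le_of_injective _ Subtype.val_injective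
    omega
  have part1 : Nat.card S + 1 ≤ Nat.card ((G.induce Sᶜ).ConnectedComponent) := by
    have h1 : (Nat.card ↥S + 1) * l ≤ Nat.card ((G.induce Sᶜ).ConnectedComponent) * l := by
      have e1 : Nat.card ↥S + Nat.card ((G.induce Sᶜ).ConnectedComponent) * l
          = Fintype.card V := by rw [← hcount]; exact hsplit
      have e2 : (Nat.card ↥S + 1) * l ≤ (k + 1) * l :=
        Nat.mul_le_mul_right l (by omega)
      have e3 : (k + 1) * l + k = (l + 1) * k + l := by ring
      linarith
    exact Nat.le_of_mul_le_mul_right h1 hl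
  refine ⟨part1, ?_⟩
  -- Bipartite structure between S and the components of G - S
  let NS : (G.induce Sᶜ).ConnectedComponent → Finset V := fun c =>
    Finset.univ.filter fun x => x ∈ S ∧ ∃ u : ↥Sᶜ, u ∈ c.supp ∧ G.Adj ↑u x
  let CJ : Finset V → Finset ((G.induce Sᶜ).ConnectedComponent) := fun J =>
    Finset.univ.filter fun c => NS c ⊆ J
  let P : Finset V → Prop := fun J => ↑J ⊆ S ∧ J.card + 1 ≤ (CJ J).card
  have hPS : P S.toFinset := by
    constructor
    · simp
    · have h1 : CJ S.toFinset = Finset.univ := by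
        apply Finset.eq_univ_of_forall
        intro c
        simp only [CJ, Finset.mem_filter, Finset.mem_univ, true_and]
        intro x hx
        simp only [NS, Finset.mem_filter] at hx
        simpa using hx.2.1
      rw [h1, Finset.card_univ, Set.toFinset_card, ← Nat.card_eq_fintype_card,
        ← Nat.card_eq_fintype_card]
      exact part1
  obtain ⟨J, hJmem, hJmin'⟩ := Finset.exists_min_image (Finset.univ.filter P) Finset.card
    ⟨S.toFinset, Finset.mem_filter.mpr ⟨Finset.mem_univ _, hPS⟩⟩
  have hJmin : ∀ J' : Finset V, P J' → J.card ≤ J'.card := fun J' h =>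
    hJmin' J' (Finset.mem_filter.mpr ⟨Finset.mem_univ _, h⟩)
  obtain ⟨hJS, hJcard⟩ : P J := (Finset.mem_filter.mp hJmem).2
  -- Hall's condition
  let t : ↥J → Finset ((G.induce Sᶜ).ConnectedComponent) := fun x =>
    (CJ J).filter fun c => ∃ u : ↥Sᶜ, u ∈ c.supp ∧ G.Adj ↑u ↑x
  have hall : ∀ s : Finset ↥J, s.card ≤ (s.biUnion t).card := by
    intro s
    by_contra hcon
    push_neg at hcon
    have hsne : s.Nonempty := by
      rcases s.eq_empty_or_nonempty with rfl | h
      · simp at hcon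
      · exact h
    set T : Finset V := s.image Subtype.val with hT
    have hTcard : T.card = s.card := Finset.card_image_of_injective s Subtype.val_injective
    have hTJ : T ⊆ J := by
      intro x hx
      obtain ⟨x', _, rfl⟩ := Finset.mem_image.mp hx
      exact x'.2
    have hsub : (CJ J) \ (s.biUnion t) ⊆ CJ (J \ T) := by
      intro c hc
      rw [Finset.mem_sdiff] at hc
      obtain ⟨hc1, hc2⟩ := hc
      simp only [CJ, Finset.mem_filter, Finset.mem_univ, true_and] at hc1 ⊢
      intro x hx
      have hxJ : x ∈ J := hc1 hx
      rw [Finset.mem_sdiff]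
      refine ⟨hxJ, fun hxT => hc2 ?_⟩
      obtain ⟨x', hx's, hx'⟩ := Finset.mem_image.mp hxT
      refine Finset.mem_biUnion.mpr ⟨x', hx's, ?_⟩
      simp only [t, Finset.mem_filter]
      refine ⟨by simp only [CJ, Finset.mem_filter, Finset.mem_univ, true_and]; exact hc1, ?_⟩
      simp only [NS, Finset.mem_filter] at hx
      obtain ⟨-, -, u, hu1, hu2⟩ := hx
      exact ⟨u, hu1, hx' ▸ hu2⟩
    have hcard' : (CJ J).card - (s.biUnion t).card ≤ (CJ (J \ T)).card :=
      le_trans (Finset.le_card_sdiff _ _) (Finset.card_le_card hsub)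
    have hPJ' : P (J \ T) := by
      refine ⟨fun x hx => hJS ?_, ?_⟩
      · exact Finset.mem_coe.mpr (Finset.sdiff_subset (Finset.mem_coe.mp hx))
      · have h1 : (J \ T).card = J.card - T.card := Finset.card_sdiff_of_subset hTJ
        have h2 : T.card ≤ J.card := Finset.card_le_card hTJ
        have h3 : (CJ J).card ≤ Fintype.card ((G.induce Sᶜ).ConnectedComponent) :=
          Finset.card_le_univ _
        omega
    have hlt : (J \ T).card < J.card := by
      have h0 : 0 < T.card := Finset.card_pos.mpr (hsne.image _)
      have h2 : T.card ≤ J.card := Finset.card_le_card hTJ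
      rw [Finset.card_sdiff_of_subset hTJ]
      omega
    exact absurd (hJmin _ hPJ') (by omega)
  obtain ⟨f, hfinj, hft⟩ := (Finset.all_card_le_biUnion_card_iff_exists_injective t).mp hall
  -- the crown
  let Iset : Set V := {v | ∃ h : v ∈ Sᶜ, (G.induce Sᶜ).connectedComponentMk ⟨v, h⟩ ∈ CJ J}
  have hIS : Iset ⊆ Sᶜ := fun v hv => hv.choose
  have hclosed : ∀ x y : ↥Sᶜ, (G.induce Sᶜ).Adj x y → ↑x ∈ Iset → ↑y ∈ Iset := by
    intro x y hadj hx
    obtain ⟨hx', hc⟩ := hx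
    have hc' : (G.induce Sᶜ).connectedComponentMk x ∈ CJ J := hc
    refine ⟨y.2, ?_⟩
    show (G.induce Sᶜ).connectedComponentMk y ∈ CJ J
    rw [← ConnectedComponent.connectedComponentMk_eq_of_adj hadj]
    exact hc'
  let φ : G.induce Iset →g G.induce Sᶜ :=
    ⟨fun v => ⟨↑v, hIS v.2⟩, fun {a b} hab => by simpa using hab⟩
  let Φ : (G.induce Iset).ConnectedComponent → (G.induce Sᶜ).ConnectedComponent :=
    fun d => d.map φ
  have hΦmk : ∀ u : ↥Iset, Φ ((G.induce Iset).connectedComponentMk u) =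
      (G.induce Sᶜ).connectedComponentMk ⟨↑u, hIS u.2⟩ := fun u =>
    ConnectedComponent.map_mk φ u
  have hΦmem : ∀ d : (G.induce Iset).ConnectedComponent, Φ d ∈ CJ J := by
    refine ConnectedComponent.ind ?_
    intro u
    obtain ⟨h, hc⟩ := u.2
    rw [hΦmk u]
    exact hc
  have hΦinj : Function.Injective Φ := by
    have : ∀ d e : (G.induce Iset).ConnectedComponent, Φ d = Φ e → d = e := by
      refine ConnectedComponent.ind₂ ?_
      intro u v h
      rw [hΦmk u, hΦmk v, ConnectedComponent.eq] at h
      obtain ⟨p⟩ := h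
      obtain ⟨hv, hr⟩ := walkRestrict hclosed p u.2
      have hu' : (⟨↑(⟨↑u, hIS u.2⟩ : ↥Sᶜ), u.2⟩ : ↥Iset) = u := rfl
      have hv' : (⟨↑(⟨↑v, hIS v.2⟩ : ↥Sᶜ), hv⟩ : ↥Iset) = v := rfl
      rw [hu', hv'] at hr
      exact ConnectedComponent.sound hr
    exact fun d e => this d e
  have hsuppcard : ∀ d : (G.induce Iset).ConnectedComponent,
      Nat.card d.supp = Nat.card (Φ d).supp := by
    refine ConnectedComponent.ind ?_
    intro u
    have himg : (Φ ((G.induce Iset).connectedComponentMk u)).supp =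
        (fun x : ↥Iset => (⟨↑x, hIS x.2⟩ : ↥Sᶜ)) '' ((G.induce Iset).connectedComponentMk u).supp := by
      ext w
      constructor
      · intro hw
        rw [ConnectedComponent.mem_supp_iff, hΦmk u, ConnectedComponent.eq] at hw
        obtain ⟨p⟩ := hw.symm
        obtain ⟨hw', hr⟩ := walkRestrict hclosed p u.2
        refine ⟨⟨↑w, hw'⟩, ?_, rfl⟩
        rw [ConnectedComponent.mem_supp_iff]
        have hu' : (⟨↑(⟨↑u, hIS u.2⟩ : ↥Sᶜ), u.2⟩ : ↥Iset) = u := rfl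
        rw [hu'] at hr
        exact (ConnectedComponent.sound hr).symm
      · rintro ⟨x, hx, rfl⟩
        rw [ConnectedComponent.mem_supp_iff] at hx ⊢
        rw [← hx, hΦmk x]
    have hvalinj : Function.Injective (fun x : ↥Iset => (⟨↑x, hIS x.2⟩ : ↥Sᶜ)) := by
      intro a b hab
      have : (a : V) = b := congrArg (fun z : ↥Sᶜ => (z : V)) hab
      exact Subtype.ext this
    rw [himg, Nat.card_coe_set_eq, Nat.card_coe_set_eq]
    exact (Set.ncard_image_of_injective _ hvalinj).symm
  have hAll : AllCompsSize G Iset l := fun d => (hsuppcard d).trans (hS' (Φ d))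
  -- surjectivity of Φ onto CJ J
  have hΦsurj : ∀ c ∈ CJ J, ∃ d : (G.induce Iset).ConnectedComponent, Φ d = c := by
    intro c hc
    have hpos : Nat.card c.supp ≠ 0 := by rw [hS' c]; omega
    have hne : Nonempty c.supp := (Nat.card_ne_zero.mp hpos).1
    obtain ⟨w, hw⟩ := hne
    have hwc : (G.induce Sᶜ).connectedComponentMk w = c :=
      (ConnectedComponent.mem_supp_iff _ _).mp hw
    have hwI : ↑w ∈ Iset := ⟨w.2, by rw [show (⟨↑w, w.2⟩ : ↥Sᶜ) = w from rfl, hwc]; exact hc⟩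
    refine ⟨(G.induce Iset).connectedComponentMk ⟨↑w, hwI⟩, ?_⟩
    rw [hΦmk, show (⟨↑(⟨↑w, hwI⟩ : ↥Iset), hIS hwI⟩ : ↥Sᶜ) = w from rfl, hwc]
  -- the matching
  have hwit : ∀ x : ↥J, (f x ∈ CJ J) ∧ ∃ u : ↥Sᶜ, u ∈ (f x).supp ∧ G.Adj ↑u ↑x :=
    fun x => Finset.mem_filter.mp (hft x)
  let toJ : ↥(↑J : Set V) → ↥J := fun x => ⟨↑x, x.2⟩
  let uwit : ↥J → ↥Sᶜ := fun x => (hwit x).2.choose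
  have huw1 : ∀ x, (uwit x) ∈ (f x).supp := fun x => (hwit x).2.choose_spec.1
  have huw2 : ∀ x, G.Adj ↑(uwit x) ↑x := fun x => (hwit x).2.choose_spec.2
  have huwmk : ∀ x, (G.induce Sᶜ).connectedComponentMk (uwit x) = f x :=
    fun x => (ConnectedComponent.mem_supp_iff _ _).mp (huw1 x)
  have huwI : ∀ x, ↑(uwit x) ∈ Iset := by
    intro x
    refine ⟨(uwit x).2, ?_⟩
    rw [show (⟨↑(uwit x), (uwit x).2⟩ : ↥Sᶜ) = uwit x from rfl, huwmk x]
    exact (hwit x).1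
  let M : ↥(↑J : Set V) → (G.induce Iset).ConnectedComponent :=
    fun x => (G.induce Iset).connectedComponentMk ⟨↑(uwit (toJ x)), huwI _⟩
  have hΦM : ∀ x, Φ (M x) = f (toJ x) := by
    intro x
    show Φ ((G.induce Iset).connectedComponentMk _) = _
    rw [hΦmk, show (⟨↑(⟨↑(uwit (toJ x)), huwI _⟩ : ↥Iset), hIS (huwI _)⟩ : ↥Sᶜ)
      = uwit (toJ x) from rfl, huwmk]
  have hMinj : Function.Injective M := by
    intro x y hxy
    have h1 : f (toJ x) = f (toJ y) := by rw [← hΦM, ← hΦM, hxy]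
    have h2 := hfinj h1
    exact Subtype.ext (congrArg (fun z : ↥J => (z : V)) h2)
  have hMadj : ∀ x : ↥(↑J : Set V), ∃ u ∈ (M x).supp, G.Adj (u : V) (x : V) := by
    intro x
    refine ⟨⟨↑(uwit (toJ x)), huwI _⟩, ?_, huw2 (toJ x)⟩
    rw [ConnectedComponent.mem_supp_iff]
  -- nonempty
  have hIne : Iset.Nonempty := by
    have : 0 < (CJ J).card := by omega
    obtain ⟨c, hc⟩ := Finset.card_pos.mp this
    obtain ⟨d, hd⟩ := hΦsurj c hc
    revert hd
    refine ConnectedComponent.ind (fun u => ?_) d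
    intro _
    exact ⟨↑u, u.2⟩
  -- cardinality bound
  have hcardI : (CJ J).card ≤ Nat.card ((G.induce Iset).ConnectedComponent) := by
    let g : ↥(CJ J) → (G.induce Iset).ConnectedComponent :=
      fun c => (hΦsurj ↑c c.2).choose
    have hg : ∀ c, Φ (g c) = ↑c := fun c => (hΦsurj ↑c c.2).choose_spec
    have hginj : Function.Injective g := by
      intro a b hab
      have : (a : (G.induce Sᶜ).ConnectedComponent) = b := by rw [← hg a, ← hg b, hab]
      exact Subtype.ext this
    calc (CJ J).card = Nat.card ↥(CJ J) := (Nat.card_eq_finsetCard _).symm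
      _ ≤ _ := Nat.card_le_card_of_injective g hginj
  have hJcardset : Nat.card ↥(↑J : Set V) = J.card := by
    rw [Nat.card_coe_set_eq, Set.ncard_coe_finset]
  -- assemble
  refine ⟨Iset, ↑J, (Iset ∪ ↑J)ᶜ, ⟨⟨?_, ?_, ?_, ?_, hAll, ?_, M, hMinj, hMadj⟩, hIne, ?_⟩⟩
  · exact Set.union_compl_self _
  · rw [Set.disjoint_left]
    intro v hv hvJ
    exact hIS hv (hJS hvJ)
  · rw [Set.disjoint_left]
    intro v hv hvR
    exact hvR (Or.inl hv)
  · rw [Set.disjoint_left]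
    intro v hv hvR
    exact hvR (Or.inr hv)
  · intro u hu v hv hadj
    rcases em (v ∈ S) with hvS | hvS
    · -- then v ∈ NS (component of u) ⊆ J
      obtain ⟨hu', hc⟩ := hu
      have hvNS : v ∈ NS ((G.induce Sᶜ).connectedComponentMk ⟨u, hu'⟩) := by
        simp only [NS, Finset.mem_filter, Finset.mem_univ, true_and]
        exact ⟨hvS, ⟨u, hu'⟩, by rw [ConnectedComponent.mem_supp_iff], hadj⟩
      have hcJ : NS ((G.induce Sᶜ).connectedComponentMk ⟨u, hu'⟩) ⊆ J := by
        have := hc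
        simp only [CJ, Finset.mem_filter, Finset.mem_univ, true_and] at this
        exact this
      exact hv (Or.inr (hcJ hvNS))
    · -- then v ∈ Iset
      have hv' : v ∈ Sᶜ := hvS
      have : ↑(⟨v, hv'⟩ : ↥Sᶜ) ∈ Iset :=
        hclosed ⟨u, hIS hu⟩ ⟨v, hv'⟩ (by simpa using hadj) hu
      exact hv (Or.inl this)
  · rw [hJcardset]
    omega
end

section
/- Let G be a graph, S ⊆ V(G) an l-ECOC solution, and (I, J, R) an ECOC crown decomposition of G. Let 𝒞₂ be the set of components of G[I] adjacent to some vertex of J \ S, let 𝒞' be the set of components of G − S containing a vertex of J \ S, let T = V(𝒞') ∪ V(𝒞₂), and let D = V(𝒞') \ V(𝒞₂). Then S' = (S \ V(𝒞₂)) ∪ D is an l-ECOC solution satisfying |S'| ≤ |S|. -/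
open SimpleGraph

variable {V : Type*}

lemma reachIn_refl_s7 (G : SimpleGraph V) {X : Set V} {u : V} (hu : u ∈ X) : ReachIn G X u u :=
  ⟨hu, hu, Reachable.refl _⟩

lemma reachIn_symm (G : SimpleGraph V) {X : Set V} {u v : V} (h : ReachIn G X u v) :
    ReachIn G X v u := by
  obtain ⟨hu, hv, hr⟩ := h; exact ⟨hv, hu, hr.symm⟩

lemma reachIn_trans (G : SimpleGraph V) {X : Set V} {u v w : V} (h : ReachIn G X u v)
    (h2 : ReachIn G X v w) : ReachIn G X u w := by
  obtain ⟨hu, hv, hr⟩ := h; obtain ⟨hv', hw, hr'⟩ := h2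
  exact ⟨hu, hw, hr.trans hr'⟩

lemma reachIn_adj (G : SimpleGraph V) {X : Set V} {u v : V} (hu : u ∈ X) (hv : v ∈ X)
    (h : G.Adj u v) : ReachIn G X u v :=
  ⟨hu, hv, Adj.reachable (by exact h)⟩

lemma reachIn_closure (G : SimpleGraph V) {X : Set V} {P : V → Prop}
    (hP : ∀ a b, a ∈ X → b ∈ X → G.Adj a b → P a → P b)
    {u v : V} (h : ReachIn G X u v) (hu : P u) : P v := by
  obtain ⟨hu', hv', hr⟩ := h
  have key : ∀ (a b : X) (w : (G.induce X).Walk a b), P a → P b := by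
    intro a b w
    induction w with
    | nil => exact id
    | cons h p ih => exact fun hpa => ih (hP _ _ (by simp) (by simp) h hpa)
  obtain ⟨w⟩ := hr
  exact key _ _ w hu

lemma reachSet_eq (G : SimpleGraph V) {X : Set V} {v : V} (hv : v ∈ X) :
    {u | ReachIn G X v u} =
      Subtype.val '' ((G.induce X).connectedComponentMk ⟨v, hv⟩).supp := by
  ext u
  simp only [Set.mem_setOf_eq, Set.mem_image]
  constructor
  · rintro ⟨hv', hu, hr⟩
    exact ⟨⟨u, hu⟩, (ConnectedComponent.mem_supp_iff _ _).2 (ConnectedComponent.eq.2 hr.symm), rfl⟩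
  · rintro ⟨⟨u', hu⟩, hmem, rfl⟩
    exact ⟨hv, hu, (ConnectedComponent.eq.1 ((ConnectedComponent.mem_supp_iff _ _).1 hmem)).symm⟩

lemma card_reachSet (G : SimpleGraph V) {X : Set V} {l : ℕ} (hX : AllCompsSize G X l) {v : V}
    (hv : v ∈ X) : Nat.card {u | ReachIn G X v u} = l := by
  rw [reachSet_eq G hv, Nat.card_image_of_injective Subtype.val_injective]
  exact hX _

lemma card_supp_reach (G : SimpleGraph V) {X : Set V} (a : X) :
    Nat.card (((G.induce X).connectedComponentMk a).supp) =
      Nat.card {u | ReachIn G X (a : V) u} := by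
  rw [reachSet_eq G a.2, Nat.card_image_of_injective Subtype.val_injective]

lemma ncard_diff_add_inter {α : Type*} (s t : Set α) (hs : s.Finite) :
    (s \ t).ncard + (s ∩ t).ncard = s.ncard := by
  rw [← Set.ncard_union_eq (by rw [Set.disjoint_left]; rintro x ⟨-, hx⟩ ⟨-, hx'⟩; exact hx hx')
    (hs.subset Set.diff_subset) (hs.subset Set.inter_subset_left), Set.diff_union_inter]

lemma fiber_ncard {α β : Type*} [Finite α] (f : α → β) (F : Set β) (hF : F.Finite) (l : ℕ)
    (hfib : ∀ b ∈ F, (f ⁻¹' {b}).ncard = l) : (f ⁻¹' F).ncard = l * F.ncard := by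
  revert hfib
  refine Set.Finite.induction_on (motive := fun F _ => (∀ b ∈ F, (f ⁻¹' {b}).ncard = l) → (f ⁻¹' F).ncard = l * F.ncard) F hF ?_ ?_
  · intro _; simp
  · intro b F₀ hb hF₀ ih hfib
    have hdisj : Disjoint (f ⁻¹' {b}) (f ⁻¹' F₀) := by
      rw [Set.disjoint_left]
      rintro x hx1 hx2
      rw [Set.mem_preimage, Set.mem_singleton_iff] at hx1
      rw [Set.mem_preimage] at hx2
      exact hb (hx1 ▸ hx2)
    rw [Set.insert_eq, Set.preimage_union,
      Set.ncard_union_eq hdisj (Set.toFinite _) (Set.toFinite _),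
      Set.ncard_union_eq (Set.disjoint_singleton_left.2 hb) (Set.finite_singleton b) hF₀,
      Set.ncard_singleton, hfib b (Set.mem_insert _ _),
      ih (fun c hc => hfib c (Set.mem_insert_of_mem _ hc))]
    ring

theorem stmt7 [Fintype V] (G : SimpleGraph V) (l : ℕ) (hl : 1 ≤ l)
    (S : Set V) (hS : IsECOCSol G l S)
    (I J R : Set V) (hcrown : IsECOCCrown G l I J R)
    (VC2 : Set V) (hVC2 : VC2 = {v | ∃ u w, ReachIn G I v u ∧ G.Adj u w ∧ w ∈ J \ S})
    (VC' : Set V) (hVC' : VC' = {v | ∃ w ∈ J \ S, ReachIn G Sᶜ v w}) :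
    IsECOCSol G l ((S \ VC2) ∪ (VC' \ VC2)) ∧
    Nat.card ((S \ VC2) ∪ (VC' \ VC2) : Set V) ≤ Nat.card S := by
  classical
  obtain ⟨hIJR, hIJ, hIR, hJR, hIcomp, hIRe, M, hMinj, hMadj⟩ := hcrown
  have hS' : AllCompsSize G Sᶜ l := hS
  set A : Set V := (S \ VC2) ∪ (VC' \ VC2) with hA
  have hVC'Sc : VC' ⊆ Sᶜ := by
    rintro v hv; rw [hVC'] at hv
    obtain ⟨w, hwJS, hvS, hwS, -⟩ := hv; exact hvS
  have hVC2I : VC2 ⊆ I := by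
    rintro v hv; rw [hVC2] at hv
    obtain ⟨u, w, ⟨hvI, -, -⟩, -, -⟩ := hv; exact hvI
  have hVC2closed : ∀ v ∈ VC2, ∀ u, ReachIn G I v u → u ∈ VC2 := by
    intro v hv u hr
    rw [hVC2] at hv ⊢
    obtain ⟨u', w, hru, haw, hwJS⟩ := hv
    exact ⟨u', w, reachIn_trans G (reachIn_symm G hr) hru, haw, hwJS⟩
  have hVC'closed : ∀ v ∈ VC', ∀ u, ReachIn G Sᶜ v u → u ∈ VC' := by
    intro v hv u hr
    rw [hVC'] at hv ⊢
    obtain ⟨w, hwJS, hrw⟩ := hv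
    exact ⟨w, hwJS, reachIn_trans G (reachIn_symm G hr) hrw⟩
  have hVC2Ac : VC2 ⊆ Aᶜ := by
    intro v hv h
    rcases h with h | h <;> exact h.2 hv
  have hS'c : Aᶜ = VC2 ∪ (Sᶜ \ VC') := by
    ext v
    simp only [hA, Set.mem_compl_iff, Set.mem_union, Set.mem_diff]
    by_cases hv : v ∈ VC2 <;> by_cases hvS : v ∈ S <;> by_cases hvC : v ∈ VC' <;> tauto
  have hScAc : Sᶜ \ VC' ⊆ Aᶜ := by rw [hS'c]; exact Set.subset_union_right
  -- (C): no edges leave VC2 into Aᶜ \ VC2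
  have hC : ∀ v ∈ VC2, ∀ u, G.Adj v u → u ∈ Aᶜ → u ∈ VC2 := by
    intro v hv u hadj hu
    have hvI : v ∈ I := hVC2I hv
    have hu3 : u ∈ I ∪ J ∪ R := by rw [hIJR]; trivial
    rcases hu3 with (hI | hJ) | hR
    · exact hVC2closed v hv u (reachIn_adj G hvI hI hadj)
    · exfalso
      have huVC2 : u ∉ VC2 := fun h => Set.disjoint_left.mp hIJ (hVC2I h) hJ
      by_cases huS : u ∈ S
      · exact hu (Or.inl ⟨huS, huVC2⟩)
      · have huV : u ∈ VC' := by
          rw [hVC']; exact ⟨u, ⟨hJ, huS⟩, reachIn_refl_s7 G huS⟩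
        exact hu (Or.inr ⟨huV, huVC2⟩)
    · exact absurd hadj (hIRe v hvI u hR)
  -- (D): VC2 ∩ Sᶜ ⊆ VC'
  have hD : ∀ v, v ∈ VC2 → v ∈ Sᶜ → v ∈ VC' := by
    intro v hv hvS
    by_cases hJreach : ∃ u, ReachIn G Sᶜ v u ∧ u ∈ J
    · obtain ⟨u, hru, huJ⟩ := hJreach
      obtain ⟨h1, h2, h3⟩ := hru
      rw [hVC']
      exact ⟨u, ⟨huJ, h2⟩, h1, h2, h3⟩
    · push_neg at hJreach
      exfalso
      have hvI : v ∈ I := hVC2I hv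
      have hstep : ∀ a b, a ∈ Sᶜ → b ∈ Sᶜ → G.Adj a b →
          (ReachIn G Sᶜ v a ∧ a ∈ I ∧ ReachIn G I v a) →
          (ReachIn G Sᶜ v b ∧ b ∈ I ∧ ReachIn G I v b) := by
        rintro a b ha hb hadj ⟨hra, haI, hraI⟩
        have hrb : ReachIn G Sᶜ v b := reachIn_trans G hra (reachIn_adj G ha hb hadj)
        have hbI : b ∈ I := by
          have hb3 : b ∈ I ∪ J ∪ R := by rw [hIJR]; trivial
          rcases hb3 with (h | h) | h
          · exact h
          · exact absurd h (hJreach b hrb)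
          · exact absurd hadj (hIRe a haI b h)
        exact ⟨hrb, hbI, reachIn_trans G hraI (reachIn_adj G haI hbI hadj)⟩
      have hP : ∀ u, ReachIn G Sᶜ v u → (u ∈ I ∧ ReachIn G I v u) := fun u hu =>
        (reachIn_closure G hstep hu ⟨reachIn_refl_s7 G hvS, hvI, reachIn_refl_s7 G hvI⟩).2
      have hsub : {u | ReachIn G Sᶜ v u} ⊆ {u | ReachIn G I v u} := fun u hu => (hP u hu).2
      have hcard1 : Nat.card {u | ReachIn G Sᶜ v u} = l := card_reachSet G hS' hvS
      have hcard2 : Nat.card {u | ReachIn G I v u} = l := card_reachSet G hIcomp hvI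
      have heq : {u | ReachIn G Sᶜ v u} = {u | ReachIn G I v u} :=
        Set.eq_of_subset_of_ncard_le hsub
          (by rw [← Nat.card_coe_set_eq, ← Nat.card_coe_set_eq, hcard1, hcard2])
          (Set.toFinite _)
      rw [hVC2] at hv
      obtain ⟨u, w, hru, huw, hwJ, hwS⟩ := hv
      have hru' : ReachIn G Sᶜ v u := by
        have : u ∈ {u | ReachIn G I v u} := hru
        rw [← heq] at this; exact this
      have huS : u ∈ Sᶜ := by obtain ⟨-, h, -⟩ := hru'; exact h
      have hrw : ReachIn G Sᶜ v w := reachIn_trans G hru' (reachIn_adj G huS hwS huw)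
      exact hJreach w hrw hwJ
  constructor
  · -- solution property
    intro c
    obtain ⟨a, ha⟩ := c.exists_rep
    have ha' : (G.induce Aᶜ).connectedComponentMk a = c := ha
    rw [← ha', card_supp_reach]
    have haAc : (a : V) ∈ VC2 ∪ (Sᶜ \ VC') := by rw [← hS'c]; exact a.2
    rcases haAc with hv | hv
    · have heq : {u | ReachIn G Aᶜ (a : V) u} = {u | ReachIn G I (a : V) u} := by
        apply Set.Subset.antisymm
        · intro u hu
          refine (reachIn_closure G (P := fun u => u ∈ VC2 ∧ ReachIn G I (a : V) u)
            ?_ hu ⟨hv, reachIn_refl_s7 G (hVC2I hv)⟩).2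
          rintro x y hx hy hadj ⟨hx2, hrx⟩
          have hy2 : y ∈ VC2 := hC x hx2 y hadj hy
          exact ⟨hy2, reachIn_trans G hrx (reachIn_adj G (hVC2I hx2) (hVC2I hy2) hadj)⟩
        · intro u hu
          refine (reachIn_closure G (P := fun u => u ∈ VC2 ∧ ReachIn G Aᶜ (a : V) u)
            ?_ hu ⟨hv, reachIn_refl_s7 G a.2⟩).2
          rintro x y hx hy hadj ⟨hx2, hrx⟩
          have hy2 : y ∈ VC2 := hVC2closed x hx2 y (reachIn_adj G hx hy hadj)
          exact ⟨hy2, reachIn_trans G hrx (reachIn_adj G (hVC2Ac hx2) (hVC2Ac hy2) hadj)⟩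
      rw [heq]
      exact card_reachSet G hIcomp (hVC2I hv)
    · have heq : {u | ReachIn G Aᶜ (a : V) u} = {u | ReachIn G Sᶜ (a : V) u} := by
        apply Set.Subset.antisymm
        · intro u hu
          refine (reachIn_closure G (P := fun u => u ∈ Sᶜ \ VC' ∧ ReachIn G Sᶜ (a : V) u)
            ?_ hu ⟨hv, reachIn_refl_s7 G hv.1⟩).2
          rintro x y hx hy hadj ⟨hx2, hrx⟩
          have hy2 : y ∈ Sᶜ \ VC' := by
            have hy3 : y ∈ VC2 ∪ (Sᶜ \ VC') := by rw [← hS'c]; exact hy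
            rcases hy3 with h | h
            · exact absurd (hD x (hC y h x hadj.symm hx) hx2.1) hx2.2
            · exact h
          exact ⟨hy2, reachIn_trans G hrx (reachIn_adj G hx2.1 hy2.1 hadj)⟩
        · intro u hu
          refine (reachIn_closure G (P := fun u => u ∈ Sᶜ \ VC' ∧ ReachIn G Aᶜ (a : V) u)
            ?_ hu ⟨hv, reachIn_refl_s7 G a.2⟩).2
          rintro x y hx hy hadj ⟨hx2, hrx⟩
          have hyV : y ∉ VC' := fun h => hx2.2 (hVC'closed y h x (reachIn_adj G hy hx hadj.symm))
          have hy2 : y ∈ Sᶜ \ VC' := ⟨hy, hyV⟩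
          exact ⟨hy2, reachIn_trans G hrx (reachIn_adj G (hScAc hx2) (hScAc hy2) hadj)⟩
      rw [heq]
      exact card_reachSet G hS' hv.1
  · -- cardinality
    rw [Nat.card_coe_set_eq, Nat.card_coe_set_eq]
    have hdisj : Disjoint (S \ VC2) (VC' \ VC2) := by
      rw [Set.disjoint_left]; rintro x ⟨hxS, -⟩ ⟨hxV, -⟩; exact hVC'Sc hxV hxS
    rw [hA, Set.ncard_union_eq hdisj (Set.toFinite _) (Set.toFinite _)]
    have hSsplit : (S \ VC2).ncard + (S ∩ VC2).ncard = S.ncard :=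
      ncard_diff_add_inter S VC2 (Set.toFinite _)
    have hmain : VC'.ncard ≤ VC2.ncard := by
      set F' : Set ((G.induce Sᶜ).ConnectedComponent) :=
        {c | ∃ w, ∃ hw : w ∈ Sᶜ, w ∈ J ∧ (G.induce Sᶜ).connectedComponentMk ⟨w, hw⟩ = c} with hF'
      set F2 : Set ((G.induce I).ConnectedComponent) := M '' {x : J | (x : V) ∉ S} with hF2
      have hVC'eq : VC' = Subtype.val '' ((G.induce Sᶜ).connectedComponentMk ⁻¹' F') := by
        rw [hVC']; ext v
        simp only [Set.mem_setOf_eq, Set.mem_image, Set.mem_preimage, hF', Set.mem_diff]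
        constructor
        · rintro ⟨w, ⟨hwJ, hwS⟩, hv, hw, hr⟩
          exact ⟨⟨v, hv⟩, ⟨w, hw, hwJ, ConnectedComponent.eq.2 hr.symm⟩, rfl⟩
        · rintro ⟨⟨v', hv⟩, ⟨w, hw, hwJ, hc⟩, rfl⟩
          exact ⟨w, ⟨hwJ, hw⟩, hv, hw, (ConnectedComponent.eq.1 hc).symm⟩
      have hVC2sup : Subtype.val '' ((G.induce I).connectedComponentMk ⁻¹' F2) ⊆ VC2 := by
        rintro v ⟨⟨v', hvI⟩, hmem, rfl⟩
        rw [Set.mem_preimage, hF2] at hmem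
        obtain ⟨x, hxS, hMx⟩ := hmem
        obtain ⟨u, huMx, hadj⟩ := hMadj x
        rw [hVC2]
        refine ⟨u, x, ⟨hvI, u.2, ?_⟩, hadj, x.2, hxS⟩
        have h1 : (G.induce I).connectedComponentMk u = M x :=
          (ConnectedComponent.mem_supp_iff _ _).1 huMx
        have h2 : (G.induce I).connectedComponentMk ⟨v', hvI⟩ =
            (G.induce I).connectedComponentMk u := by rw [h1, hMx]
        exact ConnectedComponent.eq.1 h2
      have hcount1 : ((G.induce Sᶜ).connectedComponentMk ⁻¹' F').ncard = l * F'.ncard := by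
        refine fiber_ncard _ _ (Set.toFinite _) l (fun c _ => ?_)
        have hfib : (G.induce Sᶜ).connectedComponentMk ⁻¹' {c} = c.supp := by
          ext a; simp [ConnectedComponent.mem_supp_iff]
        rw [hfib, ← Nat.card_coe_set_eq]
        exact hS' c
      have hcount2 : ((G.induce I).connectedComponentMk ⁻¹' F2).ncard = l * F2.ncard := by
        refine fiber_ncard _ _ (Set.toFinite _) l (fun c _ => ?_)
        have hfib : (G.induce I).connectedComponentMk ⁻¹' {c} = c.supp := by
          ext a; simp [ConnectedComponent.mem_supp_iff]
        rw [hfib, ← Nat.card_coe_set_eq]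
        exact hIcomp c
      have hFle : F'.ncard ≤ F2.ncard := by
        rcases Set.eq_empty_or_nonempty F' with hFe | hFne
        · simp [hFe]
        · have hch : ∀ c, ∃ x : J, ((x : V) ∉ S ∧ ∃ hw : (x : V) ∈ Sᶜ,
              (G.induce Sᶜ).connectedComponentMk ⟨(x : V), hw⟩ = c) ∨ c ∉ F' := by
            intro c
            by_cases hc : c ∈ F'
            · obtain ⟨w, hw, hwJ, hwc⟩ := hc
              exact ⟨⟨w, hwJ⟩, Or.inl ⟨hw, hw, hwc⟩⟩
            · obtain ⟨c₀, hc₀⟩ := hFne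
              obtain ⟨w, hw, hwJ, -⟩ := hc₀
              exact ⟨⟨w, hwJ⟩, Or.inr hc⟩
          choose g hg using hch
          refine Set.ncard_le_ncard_of_injOn (fun c => M (g c)) ?_ ?_ (Set.toFinite _)
          · intro c hc
            rcases hg c with ⟨hnS, -⟩ | hne
            · exact ⟨g c, hnS, rfl⟩
            · exact absurd hc hne
          · intro c1 h1 c2 h2 hMeq
            have hgeq : g c1 = g c2 := hMinj hMeq
            rcases hg c1 with ⟨-, hw1, he1⟩ | hne
            · rcases hg c2 with ⟨-, hw2, he2⟩ | hne
              · have hsub : (⟨(g c1 : V), hw1⟩ : (Sᶜ : Set V)) = ⟨(g c2 : V), hw2⟩ := by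
                  apply Subtype.ext
                  show (g c1 : V) = (g c2 : V)
                  exact congrArg Subtype.val hgeq
                rw [← he1, ← he2, hsub]
              · exact absurd h2 hne
            · exact absurd h1 hne
      have hle1 : VC'.ncard = l * F'.ncard := by
        rw [hVC'eq, Set.ncard_image_of_injective _ Subtype.val_injective, hcount1]
      have hle2 : l * F2.ncard ≤ VC2.ncard := by
        rw [← hcount2, ← Set.ncard_image_of_injective _ Subtype.val_injective]
        exact Set.ncard_le_ncard hVC2sup (Set.toFinite _)
      calc VC'.ncard = l * F'.ncard := hle1
        _ ≤ l * F2.ncard := Nat.mul_le_mul_left l hFle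
        _ ≤ VC2.ncard := hle2
    have h1 : (VC' \ VC2).ncard ≤ (VC2 \ VC').ncard := by
      have e1 : (VC' \ VC2).ncard + (VC' ∩ VC2).ncard = VC'.ncard :=
        ncard_diff_add_inter _ _ (Set.toFinite _)
      have e2 : (VC2 \ VC').ncard + (VC2 ∩ VC').ncard = VC2.ncard :=
        ncard_diff_add_inter _ _ (Set.toFinite _)
      have e3 : (VC' ∩ VC2).ncard = (VC2 ∩ VC').ncard := by rw [Set.inter_comm]
      omega
    have h2 : VC2 \ VC' ⊆ S ∩ VC2 := by
      rintro x ⟨hx2, hxV⟩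
      refine ⟨?_, hx2⟩
      by_contra hxS
      exact hxV (hD x hx2 hxS)
    have h3 : (VC2 \ VC').ncard ≤ (S ∩ VC2).ncard := Set.ncard_le_ncard h2 (Set.toFinite _)
    omega
end

section
/- Let S be an l-ECOC solution of G and (I,J,R) an ECOC crown decomposition. Let 𝒞₂ be the set of components of G[I] adjacent to J \ S and let T = V(𝒞') ∪ V(𝒞₂) where 𝒞' is the set of components of G − S meeting J \ S. Then every connected component of (G − S)[T \ S] contains a vertex of J \ S, hence the number of such components is at most |J \ S|, and consequently |S ∩ T| ≥ |T| − l·|J \ S|. -/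
open SimpleGraph

variable {V : Type*}

lemma reach_restrict {G : SimpleGraph V} {X Y : Set V} {a b : X}
    (p : (G.induce X).Walk a b) :
    (∀ v ∈ p.support, (v : V) ∈ Y) →
    ∀ (ha : (a:V) ∈ Y) (hb : (b:V) ∈ Y), (G.induce Y).Reachable ⟨a, ha⟩ ⟨b, hb⟩ := by
  induction p with
  | nil => intro _ ha hb; exact Reachable.refl _
  | @cons u v w h q ih =>
    intro hp ha hb
    have hv : (v:V) ∈ Y := hp v (by simp)
    have hadj : (G.induce Y).Adj ⟨u, ha⟩ ⟨v, hv⟩ := by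
      have : G.Adj (u:V) (v:V) := h
      exact this
    exact (hadj.reachable).trans (ih (fun x hx => hp x (by simp [hx])) hv hb)

lemma mem_reach_of_mem_support {G : SimpleGraph V} {X : Set V} {a b : X} (p : (G.induce X).Walk a b)
    {x : X} (hx : x ∈ p.support) :
    (G.induce X).Reachable x b := by
  classical
  exact (p.dropUntil x hx).reachable

lemma exit_to_J {G : SimpleGraph V} {I J R : Set V} (hunion : I ∪ J ∪ R = Set.univ)
    (hIR : ∀ u ∈ I, ∀ v ∈ R, ¬ G.Adj u v)
    {X : Set V} {a d : X} (p : (G.induce X).Walk a d) :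
    (a:V) ∈ I → (d:V) ∉ I → ∃ b ∈ p.support, (b:V) ∈ J := by
  induction p with
  | nil => intro ha hd; exact absurd ha hd
  | @cons u v w h q ih =>
    intro ha hd
    by_cases hv : (v:V) ∈ I
    · obtain ⟨b, hb, hbJ⟩ := ih hv hd
      exact ⟨b, by simp [hb], hbJ⟩
    · refine ⟨v, by simp, ?_⟩
      have hmem : (v:V) ∈ I ∪ J ∪ R := hunion ▸ Set.mem_univ _
      rcases hmem with (h'|h')|h'
      · exact absurd h' hv
      · exact h'
      · exact absurd (h : G.Adj (u:V) (v:V)) (hIR u ha v h')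

theorem stmt9 [Fintype V] (G : SimpleGraph V) (l : ℕ) (hl : 1 ≤ l)
    (S : Set V) (hS : IsECOCSol G l S)
    (I J R : Set V) (hcrown : IsECOCCrown G l I J R)
    (VC2 : Set V) (hVC2 : VC2 = {v | ∃ u w, ReachIn G I v u ∧ G.Adj u w ∧ w ∈ J \ S})
    (VC' : Set V) (hVC' : VC' = {v | ∃ w ∈ J \ S, ReachIn G Sᶜ v w})
    (T : Set V) (hT : T = VC' ∪ VC2) :
    (∀ c : (G.induce (T \ S)).ConnectedComponent, ∃ v ∈ c.supp, (v : V) ∈ J \ S) ∧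
    Nat.card ((G.induce (T \ S)).ConnectedComponent) ≤ Nat.card (J \ S : Set V) ∧
    Nat.card T ≤ Nat.card (S ∩ T : Set V) + l * Nat.card (J \ S : Set V) := by
  classical
  obtain ⟨hunion, hIJ, hIR, hJR, hIcomp, hIRadj, M, hMinj, hMadj⟩ := hcrown
  have hS' : ∀ c : (G.induce Sᶜ).ConnectedComponent, Nat.card c.supp = l := hS
  have hIcomp' : ∀ c : (G.induce I).ConnectedComponent, Nat.card c.supp = l := hIcomp
  -- Key step: every vertex of T \ S is reachable (within G - S) to a vertex of J \ S
  have hkey : ∀ v ∈ T \ S, ∃ w ∈ J \ S, ReachIn G Sᶜ v w := by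
    rintro v ⟨hvT, hvS'⟩
    have hvS : v ∈ Sᶜ := hvS'
    rw [hT] at hvT
    rcases hvT with hv | hv
    · rw [hVC'] at hv; exact hv
    · rw [hVC2] at hv
      obtain ⟨u, w, ⟨hvI, huI, hreach⟩, hadj, hw⟩ := hv
      set c := (G.induce Sᶜ).connectedComponentMk ⟨v, hvS⟩ with hc
      by_cases hall : ∀ d ∈ c.supp, ((d : ↥Sᶜ) : V) ∈ I
      · -- all of v's G-S component lies in I : derive a contradiction
        exfalso
        set cI := (G.induce I).connectedComponentMk ⟨v, hvI⟩ with hcI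
        have hsub : Subtype.val '' c.supp ⊆ Subtype.val '' cI.supp := by
          rintro x ⟨⟨x, hxS⟩, hxc, rfl⟩
          have hxr : (G.induce Sᶜ).Reachable ⟨x, hxS⟩ ⟨v, hvS⟩ :=
            ConnectedComponent.exact hxc
          obtain ⟨p⟩ := hxr
          have hpI : ∀ y ∈ p.support, (y : V) ∈ I := by
            intro y hy
            refine hall y ?_
            have : (G.induce Sᶜ).Reachable y ⟨v, hvS⟩ := mem_reach_of_mem_support p hy
            simpa [hc, ConnectedComponent.mem_supp_iff] using (ConnectedComponent.sound this)
          have hxI : x ∈ I := hpI _ p.start_mem_support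
          have hr := reach_restrict p hpI hxI hvI
          exact ⟨⟨x, hxI⟩, by simpa [hcI, ConnectedComponent.mem_supp_iff] using
            (ConnectedComponent.sound hr), rfl⟩
        have hcards : (Subtype.val '' cI.supp).ncard ≤ (Subtype.val '' c.supp).ncard := by
          rw [Set.ncard_image_of_injective _ Subtype.val_injective,
            Set.ncard_image_of_injective _ Subtype.val_injective,
            ← Nat.card_coe_set_eq, ← Nat.card_coe_set_eq, hS' c, hIcomp' cI]
        have heq : Subtype.val '' c.supp = Subtype.val '' cI.supp :=
          Set.eq_of_subset_of_ncard_le hsub hcards (Set.toFinite _)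
        have huc : (u : V) ∈ Subtype.val '' cI.supp :=
          ⟨⟨u, huI⟩, by simpa [hcI, ConnectedComponent.mem_supp_iff] using
            (ConnectedComponent.sound hreach.symm), rfl⟩
        rw [← heq] at huc
        obtain ⟨⟨u', huS⟩, huc', hu'⟩ := huc
        cases hu'
        have hwS : w ∈ Sᶜ := hw.2
        have hwc : (⟨w, hwS⟩ : ↥Sᶜ) ∈ c.supp := by
          have hadj' : (G.induce Sᶜ).Adj ⟨u', huS⟩ ⟨w, hwS⟩ := hadj
          have : (G.induce Sᶜ).connectedComponentMk ⟨w, hwS⟩ =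
              (G.induce Sᶜ).connectedComponentMk ⟨u', huS⟩ :=
            ConnectedComponent.sound hadj'.symm.reachable
          rw [ConnectedComponent.mem_supp_iff, this]
          exact huc'
        exact (Set.disjoint_left.mp hIJ (hall _ hwc) hw.1)
      · push_neg at hall
        obtain ⟨d, hd, hdI⟩ := hall
        have hdr : (G.induce Sᶜ).Reachable ⟨v, hvS⟩ d :=
          (ConnectedComponent.exact hd).symm
        obtain ⟨p⟩ := hdr
        obtain ⟨b, hb, hbJ⟩ := exit_to_J hunion hIRadj p hvI hdI
        refine ⟨(b : V), ⟨hbJ, b.2⟩, hvS, b.2, ?_⟩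
        have := (p.takeUntil b hb).reachable
        simpa using this
  -- reachability within T \ S to a vertex of J \ S
  have hreachT : ∀ v, ∀ hv : v ∈ T \ S, ∃ w, ∃ hw : w ∈ T \ S,
      w ∈ J \ S ∧ (G.induce (T \ S)).Reachable ⟨v, hv⟩ ⟨w, hw⟩ := by
    intro v hv
    obtain ⟨w, hwJS, hvS, hwS, hr⟩ := hkey v hv
    obtain ⟨p⟩ := hr
    have hTm : ∀ x : ↥Sᶜ, (G.induce Sᶜ).Reachable x ⟨w, hwS⟩ → (x : V) ∈ T \ S := by
      intro x hx
      refine ⟨?_, x.2⟩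
      rw [hT]
      left
      rw [hVC']
      exact ⟨w, hwJS, x.2, hwS, by simpa using hx⟩
    have hp : ∀ x ∈ p.support, (x : V) ∈ T \ S := by
      intro x hx
      exact hTm x (mem_reach_of_mem_support p hx)
    have hwT : w ∈ T \ S := hTm ⟨w, hwS⟩ (Reachable.refl _)
    exact ⟨w, hwT, hwJS, reach_restrict p hp hv hwT⟩
  -- Part 1
  have part1 : ∀ c : (G.induce (T \ S)).ConnectedComponent,
      ∃ v ∈ c.supp, (v : V) ∈ J \ S := by
    intro c
    obtain ⟨⟨v, hv⟩, hrep⟩ := c.exists_rep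
    obtain ⟨w, hwT, hwJS, hr⟩ := hreachT v hv
    refine ⟨⟨w, hwT⟩, ?_, hwJS⟩
    rw [ConnectedComponent.mem_supp_iff, ← hrep]
    exact ConnectedComponent.sound hr.symm
  refine ⟨part1, ?_, ?_⟩
  · -- Part 2
    have hinj : Function.Injective
        (fun c : (G.induce (T \ S)).ConnectedComponent =>
          (⟨((part1 c).choose : V), (part1 c).choose_spec.2⟩ : (J \ S : Set V))) := by
      intro c1 c2 h
      simp only [Subtype.mk.injEq] at h
      have h'' : (part1 c1).choose = (part1 c2).choose := Subtype.ext h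
      have h1 := (part1 c1).choose_spec.1
      have h2 := (part1 c2).choose_spec.1
      rw [ConnectedComponent.mem_supp_iff] at h1 h2
      rw [← h1, ← h2, h'']
    exact Nat.card_le_card_of_injective _ hinj
  · -- Part 3
    have hsplit : Nat.card T = Nat.card (S ∩ T : Set V) + Nat.card (T \ S : Set V) := by
      rw [Nat.card_coe_set_eq, Nat.card_coe_set_eq, Nat.card_coe_set_eq,
        Set.inter_comm]
      exact (Set.ncard_inter_add_ncard_diff_eq_ncard T S (Set.toFinite _)).symm
    rw [hsplit]
    have hbound : Nat.card (T \ S : Set V) ≤ l * Nat.card (J \ S : Set V) := by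
      set D : V → Set V := fun w =>
        if h : w ∈ Sᶜ then
          Subtype.val '' ((G.induce Sᶜ).connectedComponentMk ⟨w, h⟩).supp
        else ∅ with hD
      have hDcard : ∀ w, (D w).ncard ≤ l := by
        intro w
        by_cases h : w ∈ Sᶜ
        · have : (D w).ncard = l := by
            rw [hD]
            simp only [dif_pos h]
            rw [Set.ncard_image_of_injective _ Subtype.val_injective,
              ← Nat.card_coe_set_eq, hS' _]
          exact this.le
        · rw [hD]
          simp only [dif_neg h]
          simp
      have hsub : (T \ S).toFinset ⊆
          (J \ S).toFinset.biUnion (fun w => (D w).toFinset) := by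
        intro v hv
        rw [Set.mem_toFinset] at hv
        obtain ⟨w, hwJS, hv', hw', hr⟩ := hkey v hv
        rw [Finset.mem_biUnion]
        refine ⟨w, Set.mem_toFinset.mpr hwJS, ?_⟩
        rw [Set.mem_toFinset, hD]
        simp only [dif_pos hw']
        exact ⟨⟨v, hv'⟩, by
          rw [ConnectedComponent.mem_supp_iff]
          exact ConnectedComponent.sound hr, rfl⟩
      calc Nat.card (T \ S : Set V) = (T \ S).toFinset.card := by
            rw [Nat.card_coe_set_eq, Set.ncard_eq_toFinset_card']
        _ ≤ ((J \ S).toFinset.biUnion fun w => (D w).toFinset).card :=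
            Finset.card_le_card hsub
        _ ≤ ∑ w ∈ (J \ S).toFinset, (D w).toFinset.card := Finset.card_biUnion_le
        _ ≤ ∑ _w ∈ (J \ S).toFinset, l := Finset.sum_le_sum (fun w _ => by
            rw [← Set.ncard_eq_toFinset_card']
            exact hDcard w)
        _ = (J \ S).toFinset.card * l := by rw [Finset.sum_const, smul_eq_mul]
        _ = l * Nat.card (J \ S : Set V) := by
            rw [Nat.card_coe_set_eq, Set.ncard_eq_toFinset_card', Nat.mul_comm]
    omega
end

section
/- Let (I, J, R) be an ECOC crown decomposition of G, and let x: V → [0,1] be any assignment that (a) equals 1 on every vertex of J and (b) is arbitrary on I and satisfies the LP constraints on V \ I (i.e., Σ_{v∈C} x_v ≥ 1 for every connected set C of size l+1 with C ∩ I = ∅). Then x satisfies Σ_{v∈C} x_v ≥ 1 for every connected set C of size l+1 in G. -/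
open SimpleGraph

variable {V : Type*}

lemma walk_boundary {W : Type*} (H : SimpleGraph W) (P : W → Prop) :
    ∀ {a b : W}, H.Walk a b → P a → ¬ P b → ∃ u v, H.Adj u v ∧ P u ∧ ¬ P v := by
  intro a b p
  induction p with
  | nil => intro ha hb; exact absurd ha hb
  | @cons a c b h q ih =>
    intro ha hb
    by_cases hc : P c
    · exact ih hc hb
    · exact ⟨a, c, h, ha, hc⟩

theorem stmt12 [Fintype V] (G : SimpleGraph V) (l : ℕ) (hl : 1 ≤ l)
    (I J R : Set V) (hcrown : IsECOCCrown G l I J R)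
    (x : V → ℝ) (hb : ∀ v, 0 ≤ x v ∧ x v ≤ 1) (hJ : ∀ v ∈ J, x v = 1)
    (hcon : ∀ C : Finset V, (G.induce (C : Set V)).Connected → C.card = l + 1 →
      (C : Set V) ∩ I = ∅ → 1 ≤ ∑ v ∈ C, x v) :
    ∀ C : Finset V, (G.induce (C : Set V)).Connected → C.card = l + 1 →
      1 ≤ ∑ v ∈ C, x v := by
  obtain ⟨huniv, hIJ, hIR, hJR, hcomps, hadjIR, -⟩ := hcrown
  intro C hconn hcard
  by_cases hCI : (C : Set V) ∩ I = ∅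
  · exact hcon C hconn hcard hCI
  · obtain ⟨a, haC, haI⟩ := Set.nonempty_iff_ne_empty.mpr hCI
    by_cases hsub : (C : Set V) ⊆ I
    · exfalso
      set c := (G.induce I).connectedComponentMk ⟨a, haI⟩ with hc
      let hom : G.induce (C : Set V) →g G.induce I :=
        ⟨fun w => ⟨(w : V), hsub w.2⟩, fun {p q} h => h⟩
      have hmem : ∀ w : (C : Set V), (⟨(w : V), hsub w.2⟩ : I) ∈ c.supp := by
        intro w
        have hr : (G.induce (C : Set V)).Reachable ⟨a, haC⟩ w :=
          hconn.preconnected _ _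
        have hr' : (G.induce I).Reachable ⟨a, haI⟩ ⟨(w : V), hsub w.2⟩ :=
          hr.map hom
        simpa [SimpleGraph.ConnectedComponent.mem_supp_iff, hc] using
          (SimpleGraph.ConnectedComponent.sound hr'.symm)
      have hinj : Function.Injective (fun w : (C : Set V) =>
          (⟨⟨(w : V), hsub w.2⟩, hmem w⟩ : c.supp)) := by
        intro u v huv
        have h2 : (u : V) = (v : V) :=
          congrArg (fun z : c.supp => ((z : I) : V)) huv
        exact Subtype.ext h2
      have hle : Nat.card (C : Set V) ≤ Nat.card c.supp :=
        Nat.card_le_card_of_injective _ hinj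
      have h1 : Nat.card (C : Set V) = l + 1 := by
        rw [Nat.card_coe_set_eq, Set.ncard_coe_finset, hcard]
      rw [h1, hcomps c] at hle
      omega
    · obtain ⟨b, hbC, hbI⟩ := Set.not_subset.mp hsub
      obtain ⟨p⟩ := hconn.preconnected ⟨a, haC⟩ ⟨b, hbC⟩
      obtain ⟨u, v, hadj, huI, hvI⟩ :=
        walk_boundary _ (fun w : (C : Set V) => (w : V) ∈ I) p haI hbI
      have hadj' : G.Adj (u : V) (v : V) := hadj
      have hvJ : (v : V) ∈ J := by
        have hmem : (v : V) ∈ I ∪ J ∪ R := huniv ▸ Set.mem_univ _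
        rcases hmem with (h | h) | h
        · exact absurd h hvI
        · exact h
        · exact absurd hadj' (hadjIR _ huI _ h)
      have hsum : x (v : V) ≤ ∑ w ∈ C, x w :=
        Finset.single_le_sum (fun i _ => (hb i).1) (by exact_mod_cast v.2)
      rw [hJ _ hvJ] at hsum
      exact hsum
end

section
/- Let G' be a bipartite graph with parts A' and B' where |A'| ≥ |B'| + 1. Then G' admits a VC crown decomposition: a partition (I, J, R) of V(G') with I ⊆ A' nonempty and independent, no edges between I and R, and a matching saturating J with all matched partners in I. -/
open SimpleGraph

variable {V : Type*}

theorem stmt16 [Fintype V] (G : SimpleGraph V) (A B : Set V)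
    (hpart : A ∪ B = Set.univ) (hdisj : Disjoint A B)
    (hbip : ∀ u v, G.Adj u v → (u ∈ A ∧ v ∈ B) ∨ (u ∈ B ∧ v ∈ A))
    (hcard : Nat.card B + 1 ≤ Nat.card A) :
    ∃ I J R : Set V,
      (I ∪ J ∪ R = Set.univ) ∧ Disjoint I J ∧ Disjoint I R ∧ Disjoint J R ∧
      I ⊆ A ∧ I.Nonempty ∧
      (∀ u ∈ I, ∀ v ∈ I, ¬ G.Adj u v) ∧
      (∀ u ∈ I, ∀ v ∈ R, ¬ G.Adj u v) ∧
      ∃ M : J → I, Function.Injective M ∧ ∀ x : J, G.Adj (x : V) (M x : V) := by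
  classical
  -- Finset versions of A, B and the neighborhood operator
  set Af : Finset V := Finset.univ.filter (· ∈ A) with hAf
  set Bf : Finset V := Finset.univ.filter (· ∈ B) with hBf
  set NB : Finset V → Finset V :=
    fun S => Finset.univ.filter (fun v => ∃ u ∈ S, G.Adj u v) with hNB
  have hAcard : Nat.card A = Af.card := by
    rw [Nat.card_eq_fintype_card, hAf, ← Fintype.card_subtype]
  have hBcard : Nat.card B = Bf.card := by
    rw [Nat.card_eq_fintype_card, hBf, ← Fintype.card_subtype]
  -- neighbors of subsets of A are in B
  have hNBB : ∀ S : Finset V, (∀ u ∈ S, u ∈ A) → ∀ v ∈ NB S, v ∈ B := by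
    intro S hS v hv
    simp only [hNB, Finset.mem_filter] at hv
    obtain ⟨-, u, huS, hadj⟩ := hv
    rcases hbip u v hadj with ⟨-, hvB⟩ | ⟨huB, -⟩
    · exact hvB
    · exact absurd (hdisj.le_bot ⟨hS u huS, huB⟩) (by simp)
  -- the crown-candidate property P
  set P : Finset V → Prop :=
    fun S => S.Nonempty ∧ (∀ u ∈ S, u ∈ A) ∧ (NB S).card < S.card with hP
  have hPA : P Af := by
    have hsub : NB Af ⊆ Bf := fun v hv => by
      simp only [hBf, Finset.mem_filter, Finset.mem_univ, true_and]
      exact hNBB Af (fun u hu => (Finset.mem_filter.mp hu).2) v hv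
    have h1 := Finset.card_le_card hsub
    have h2 : Bf.card < Af.card := by omega
    refine ⟨?_, fun u hu => (Finset.mem_filter.mp hu).2, by omega⟩
    rw [← Finset.card_pos]; omega
  -- take a minimum-cardinality S satisfying P
  obtain ⟨S, hSmem, hSmin⟩ :=
    Finset.exists_min_image (Finset.univ.filter P) Finset.card
      ⟨Af, by simp only [Finset.mem_filter, Finset.mem_univ, true_and]; exact hPA⟩
  rw [Finset.mem_filter] at hSmem
  obtain ⟨-, hSne, hSA, hSlt⟩ := hSmem
  have hSmin' : ∀ S' : Finset V, P S' → S.card ≤ S'.card := fun S' h =>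
    hSmin S' (by simp only [Finset.mem_filter, Finset.mem_univ, true_and]; exact h)
  -- Hall's condition for matching NB S into S
  have hall : ∀ T : Finset V, T ⊆ NB S →
      T.card ≤ (S.filter (fun u => ∃ v ∈ T, G.Adj u v)).card := by
    intro T hT
    by_contra hlt
    push_neg at hlt
    set NS : Finset V := S.filter (fun u => ∃ v ∈ T, G.Adj u v) with hNS
    have hTne : T.Nonempty := by
      rw [← Finset.card_pos]; omega
    -- NS is nonempty
    have hNSne : NS.Nonempty := by
      obtain ⟨v, hvT⟩ := hTne
      have hv := hT hvT
      simp only [hNB, Finset.mem_filter, Finset.mem_univ, true_and] at hv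
      obtain ⟨u, huS, hadj⟩ := hv
      exact ⟨u, by simp [hNS, huS]; exact ⟨v, hvT, hadj⟩⟩
    set S' : Finset V := S \ NS with hS'
    have hNSsub : NS ⊆ S := Finset.filter_subset _ _
    have hS'card : S'.card = S.card - NS.card := Finset.card_sdiff_of_subset hNSsub
    have hNB' : NB S' ⊆ NB S \ T := by
      intro v hv
      simp only [hNB, Finset.mem_filter, Finset.mem_univ, true_and] at hv
      obtain ⟨u, huS', hadj⟩ := hv
      rw [hS', Finset.mem_sdiff] at huS'
      obtain ⟨huS, huNS⟩ := huS'
      rw [Finset.mem_sdiff]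
      refine ⟨by simp [hNB]; exact ⟨u, huS, hadj⟩, fun hvT => ?_⟩
      exact huNS (by simp [hNS, huS]; exact ⟨v, hvT, hadj⟩)
    have hNB'card : (NB S').card ≤ (NB S).card - T.card := by
      have := Finset.card_le_card hNB'
      rwa [Finset.card_sdiff_of_subset hT] at this
    have hNSpos : 0 < NS.card := Finset.card_pos.mpr hNSne
    have hTcard : T.card ≤ (NB S).card := Finset.card_le_card hT
    have hS'lt : (NB S').card < S'.card := by omega
    have hPS' : P S' := by
      refine ⟨Finset.card_pos.mp (by omega), fun u hu => hSA u (Finset.mem_sdiff.mp hu).1, hS'lt⟩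
    have := hSmin' S' hPS'
    omega
  -- apply Hall's marriage theorem
  have hallmain : ∀ s : Finset {v // v ∈ NB S},
      s.card ≤ (s.biUnion (fun v => S.filter (fun u => G.Adj u (v : V)))).card := by
    intro s
    have hTsub : s.image Subtype.val ⊆ NB S := by
      intro v hv
      obtain ⟨a, _, rfl⟩ := Finset.mem_image.mp hv
      exact a.2
    have hTcard : (s.image Subtype.val).card = s.card :=
      Finset.card_image_of_injective s Subtype.coe_injective
    have heq : s.biUnion (fun v => S.filter (fun u => G.Adj u (v : V)))
        = S.filter (fun u => ∃ v ∈ s.image Subtype.val, G.Adj u v) := by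
      ext u
      simp only [Finset.mem_biUnion, Finset.mem_filter, Finset.mem_image]
      constructor
      · rintro ⟨v, hvs, huS, hadj⟩
        exact ⟨huS, v, ⟨v, hvs, rfl⟩, hadj⟩
      · rintro ⟨huS, v, ⟨a, has, rfl⟩, hadj⟩
        exact ⟨a, has, huS, hadj⟩
    rw [heq, ← hTcard]
    exact hall _ hTsub
  obtain ⟨f, hfinj, hf⟩ :=
    (Finset.all_card_le_biUnion_card_iff_exists_injective _).mp hallmain
  -- build the decomposition
  refine ⟨(S : Set V), ((NB S : Finset V) : Set V),
    (((S : Set V)) ∪ ((NB S : Finset V) : Set V))ᶜ, ?_, ?_, ?_, ?_, ?_, ?_, ?_, ?_, ?_⟩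
  · rw [Set.union_assoc, ← Set.union_assoc]
    exact Set.union_compl_self _
  · -- Disjoint I J
    rw [Set.disjoint_left]
    intro v hvS hvNB
    have hvA : v ∈ A := hSA v hvS
    have hvB : v ∈ B := hNBB S hSA v hvNB
    exact absurd (hdisj.le_bot ⟨hvA, hvB⟩) (by simp)
  · exact Disjoint.mono_left Set.subset_union_left disjoint_compl_right
  · exact Disjoint.mono_left Set.subset_union_right disjoint_compl_right
  · exact fun v hv => hSA v hv
  · obtain ⟨v, hv⟩ := hSne; exact ⟨v, hv⟩
  · -- independence of I
    intro u hu v hv hadj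
    rcases hbip u v hadj with ⟨-, hvB⟩ | ⟨huB, -⟩
    · exact absurd (hdisj.le_bot ⟨hSA v hv, hvB⟩) (by simp)
    · exact absurd (hdisj.le_bot ⟨hSA u hu, huB⟩) (by simp)
  · -- no edges between I and R
    intro u hu v hv hadj
    apply hv
    right
    simp only [Finset.coe_filter, Set.mem_setOf_eq, hNB, Finset.mem_univ, true_and]
    exact ⟨u, hu, hadj⟩
  · -- the matching
    refine ⟨fun x => ⟨f ⟨(x : V), x.2⟩, (Finset.mem_filter.mp (hf ⟨(x : V), x.2⟩)).1⟩,
      ?_, ?_⟩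
    · intro x y hxy
      have := hfinj (Subtype.ext_iff.mp hxy)
      exact Subtype.ext (Subtype.ext_iff.mp this)
    · intro x
      have := (Finset.mem_filter.mp (hf ⟨(x : V), x.2⟩)).2
      exact this.symm
end

section
/- Let G be a graph, A ⊆ V(G) such that every component of G[A] has exactly l vertices and N(A) ⊆ B where B = V(G) \ A meets this. Form the bipartite 'component graph' G' with one side A' the components of G[A], other side B' = N(A), and an edge between a component C and vertex b iff b is adjacent to C in G. Then (I', J', R') is a VC crown decomposition of G' with I' ⊆ A', J' ⊆ B' if and only if the corresponding sets I* = ∪_{C∈I'} V(C), J* = J' form an ECOC crown decomposition (I*, J*, V(G) \ (I* ∪ J*)) of G. -/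
open SimpleGraph

variable {V : Type*}

namespace Stmt17Aux

variable {V : Type*} (G : SimpleGraph V) (A : Set V)
  (I' : Set ((G.induce A).ConnectedComponent))

def ISet : Set V := {v : V | ∃ h : v ∈ A, (G.induce A).connectedComponentMk ⟨v, h⟩ ∈ I'}

lemma ISet_sub : ISet G A I' ⊆ A := fun _ h => h.1

lemma reach_up {a b : A} (w : (G.induce A).Walk a b) :
    ∀ ha : (a : V) ∈ ISet G A I',
      ∃ hb : (b : V) ∈ ISet G A I',
        (G.induce (ISet G A I')).Reachable ⟨a, ha⟩ ⟨b, hb⟩ := by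
  induction w with
  | nil => intro ha; exact ⟨ha, Reachable.refl _⟩
  | @cons a c b hadj w ih =>
    intro ha
    have hmkca : (G.induce A).connectedComponentMk c = (G.induce A).connectedComponentMk a :=
      ConnectedComponent.sound hadj.symm.reachable
    have hc : (c : V) ∈ ISet G A I' := by
      refine ⟨c.2, ?_⟩
      have ha2 : (G.induce A).connectedComponentMk a ∈ I' := ha.choose_spec
      rw [show (⟨(c : V), c.2⟩ : A) = c from rfl, hmkca]
      exact ha2
    obtain ⟨hb, hr⟩ := ih hc
    have hadj' : (G.induce (ISet G A I')).Adj ⟨a, ha⟩ ⟨c, hc⟩ := hadj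
    exact ⟨hb, hadj'.reachable.trans hr⟩

def homUp : G.induce (ISet G A I') →g G.induce A :=
  (G.induceHomOfLE (ISet_sub G A I')).toHom

noncomputable def f : (G.induce (ISet G A I')).ConnectedComponent →
    (G.induce A).ConnectedComponent :=
  ConnectedComponent.map (homUp G A I')

lemma f_mk (u : (ISet G A I' : Set V)) :
    f G A I' ((G.induce (ISet G A I')).connectedComponentMk u) =
      (G.induce A).connectedComponentMk ⟨(u : V), u.2.1⟩ := rfl

lemma f_mem (c : (G.induce (ISet G A I')).ConnectedComponent) : f G A I' c ∈ I' := by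
  induction c using SimpleGraph.ConnectedComponent.ind with
  | _ u =>
    rw [f_mk]
    exact u.2.choose_spec

lemma f_inj : Function.Injective (f G A I') := by
  intro c1 c2 h
  induction c1 using SimpleGraph.ConnectedComponent.ind with
  | _ u =>
  induction c2 using SimpleGraph.ConnectedComponent.ind with
  | _ v =>
    rw [f_mk, f_mk] at h
    obtain ⟨wlk⟩ := (ConnectedComponent.eq.mp h)
    obtain ⟨hb, hr⟩ := reach_up G A I' wlk u.2
    exact ConnectedComponent.sound hr

lemma f_surj (c : (G.induce A).ConnectedComponent) (hc : c ∈ I') :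
    ∃ c' : (G.induce (ISet G A I')).ConnectedComponent, f G A I' c' = c := by
  obtain ⟨u, hu⟩ := c.exists_rep
  have hu' : (G.induce A).connectedComponentMk u = c := hu
  have hmem : (u : V) ∈ ISet G A I' := ⟨u.2, hu' ▸ hc⟩
  refine ⟨(G.induce (ISet G A I')).connectedComponentMk ⟨(u : V), hmem⟩, ?_⟩
  exact hu

lemma card_supp (c : (G.induce (ISet G A I')).ConnectedComponent) :
    Nat.card c.supp = Nat.card (f G A I' c).supp := by
  induction c using SimpleGraph.ConnectedComponent.ind with
  | _ u =>
    refine Nat.card_congr (Equiv.ofBijective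
      (fun w => (⟨homUp G A I' w.1, ?_⟩ : ((f G A I' ((G.induce (ISet G A I')).connectedComponentMk u)).supp)))
      ⟨?_, ?_⟩)
    · have hw : (G.induce (ISet G A I')).connectedComponentMk w.1 =
        (G.induce (ISet G A I')).connectedComponentMk u := w.2
      exact congrArg (f G A I') hw
    · intro w1 w2 h
      have h2 : (homUp G A I') w1.1 = (homUp G A I') w2.1 := Subtype.ext_iff.mp h
      have h3 := congrArg (Subtype.val (p := (· ∈ A))) h2
      exact Subtype.ext (Subtype.ext h3)
    · rintro ⟨z, hz⟩
      have hz' : (G.induce A).connectedComponentMk z =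
          (G.induce A).connectedComponentMk ⟨(u : V), u.2.1⟩ := hz
      obtain ⟨wlk⟩ := (ConnectedComponent.eq.mp hz'.symm)
      obtain ⟨hb, hr⟩ := reach_up G A I' wlk u.2
      refine ⟨⟨⟨(z : V), hb⟩, ?_⟩, ?_⟩
      · exact (ConnectedComponent.sound hr).symm
      · apply Subtype.ext
        apply Subtype.ext
        rfl

noncomputable def compEquiv :
    (G.induce (ISet G A I')).ConnectedComponent ≃ {c // c ∈ I'} :=
  Equiv.ofBijective (fun c => ⟨f G A I' c, f_mem G A I' c⟩)
    ⟨fun c1 c2 h => f_inj G A I' (Subtype.ext_iff.mp h),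
     fun p => by
      obtain ⟨c', hc'⟩ := f_surj G A I' p.1 p.2
      exact ⟨c', Subtype.ext hc'⟩⟩

lemma compEquiv_apply (c : (G.induce (ISet G A I')).ConnectedComponent) :
    (compEquiv G A I' c).1 = f G A I' c := rfl

end Stmt17Aux

theorem stmt17 [Fintype V] [DecidableEq V] (G : SimpleGraph V) (l : ℕ) (hl : 1 ≤ l)
    (A : Set V) (hsz : AllCompsSize G A l)
    (G' : SimpleGraph ((G.induce A).ConnectedComponent ⊕ (nbhd G A : Set V)))
    (hG' : ∀ a b, G'.Adj a b ↔
      ((∃ c u bb, a = Sum.inl c ∧ b = Sum.inr bb ∧ u ∈ c.supp ∧ G.Adj (u : V) (bb : V)) ∨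
       (∃ c u bb, b = Sum.inl c ∧ a = Sum.inr bb ∧ u ∈ c.supp ∧ G.Adj (u : V) (bb : V))))
    (I' : Set ((G.induce A).ConnectedComponent))
    (J' : Set ((nbhd G A : Set V))) :
    -- (Sum.inl '' I', Sum.inr '' J', rest) is a VC crown decomposition of G'
    ((∀ u ∈ Sum.inl '' I', ∀ v ∈ Sum.inl '' I', ¬ G'.Adj u v) ∧
     (∀ u ∈ Sum.inl '' I', ∀ v, v ∉ Sum.inl '' I' → v ∉ Sum.inr '' J' → ¬ G'.Adj u v) ∧
     (∃ M : (Sum.inr '' J' : Set _) → (Sum.inl '' I' : Set _),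
        Function.Injective M ∧ ∀ x : (Sum.inr '' J' : Set _), G'.Adj x.1 (M x).1))
    ↔
    -- the corresponding sets form an ECOC crown decomposition of G
    (IsECOCCrown G l
      {v : V | ∃ h : v ∈ A, (G.induce A).connectedComponentMk ⟨v, h⟩ ∈ I'}
      (Subtype.val '' J')
      ({v : V | ∃ h : v ∈ A, (G.induce A).connectedComponentMk ⟨v, h⟩ ∈ I'} ∪
        Subtype.val '' J')ᶜ) := by
  classical
  constructor
  · rintro ⟨-, h2, M', hMinj, hMadj⟩
    refine ⟨Set.union_compl_self _, ?_, ?_, ?_, ?_, ?_, ?_⟩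
    · rw [Set.disjoint_left]
      rintro v ⟨hvA, -⟩ ⟨j, -, rfl⟩
      exact j.2.1 hvA
    · exact Disjoint.mono_left Set.subset_union_left disjoint_compl_right
    · exact Disjoint.mono_left Set.subset_union_right disjoint_compl_right
    · intro c
      exact (Stmt17Aux.card_supp G A I' c).trans (hsz _)
    · rintro u ⟨huA, huI⟩ v hv hadj
      by_cases hvA : v ∈ A
      · refine hv (Or.inl ⟨hvA, ?_⟩)
        have hadj' : (G.induce A).Adj ⟨u, huA⟩ ⟨v, hvA⟩ := hadj
        rw [ConnectedComponent.sound hadj'.symm.reachable]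
        exact huI
      · have hnb : v ∈ nbhd G A := ⟨hvA, u, huA, hadj⟩
        have hbJ : (⟨v, hnb⟩ : (nbhd G A : Set V)) ∉ J' := fun hj =>
          hv (Or.inr ⟨⟨v, hnb⟩, hj, rfl⟩)
        refine h2 (Sum.inl ((G.induce A).connectedComponentMk ⟨u, huA⟩))
          ⟨_, huI, rfl⟩ (Sum.inr ⟨v, hnb⟩) ?_ ?_ ?_
        · rintro ⟨c, -, hc⟩; exact absurd hc (by simp)
        · rintro ⟨j, hj, hje⟩
          exact hbJ ((Sum.inr_injective hje) ▸ hj)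
        · exact (hG' _ _).2 (Or.inl ⟨_, ⟨u, huA⟩, ⟨v, hnb⟩, rfl, rfl, rfl, hadj⟩)
    · choose jf hjf1 hjf2 using fun x : (Subtype.val '' J' : Set V) => x.2
      have ymem : ∀ x : (Subtype.val '' J' : Set V),
          (Sum.inr (jf x) : (G.induce A).ConnectedComponent ⊕ (nbhd G A : Set V))
            ∈ Sum.inr '' J' := fun x => ⟨jf x, hjf1 x, rfl⟩
      choose cf hcf1 hcf2 using fun z : (Sum.inl '' I' : Set _) => z.2
      refine ⟨fun x => (Stmt17Aux.compEquiv G A I').symm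
          ⟨cf (M' ⟨Sum.inr (jf x), ymem x⟩), hcf1 _⟩, ?_, ?_⟩
      · intro x1 x2 h
        have h1 := (Stmt17Aux.compEquiv G A I').symm.injective h
        have h2' : cf (M' ⟨Sum.inr (jf x1), ymem x1⟩) = cf (M' ⟨Sum.inr (jf x2), ymem x2⟩) :=
          Subtype.ext_iff.mp h1
        have h3 : M' ⟨Sum.inr (jf x1), ymem x1⟩ = M' ⟨Sum.inr (jf x2), ymem x2⟩ := by
          apply Subtype.ext
          rw [← hcf2, ← hcf2, h2']
        have h4 := hMinj h3
        have h5 : jf x1 = jf x2 := Sum.inr_injective (Subtype.ext_iff.mp h4)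
        apply Subtype.ext
        rw [← hjf2 x1, ← hjf2 x2, h5]
      · intro x
        have hadj' := hMadj ⟨Sum.inr (jf x), ymem x⟩
        rw [← hcf2 (M' ⟨Sum.inr (jf x), ymem x⟩)] at hadj'
        rcases (hG' _ _).1 hadj' with ⟨c, w, bb, hac, -, -, -⟩ | ⟨c, w, bb, hbc, hab, hw, hwadj⟩
        · exact absurd hac (by simp)
        · have hc : c = cf (M' ⟨Sum.inr (jf x), ymem x⟩) := (Sum.inl_injective hbc).symm
          have hbb : bb = jf x := (Sum.inr_injective hab).symm
          have hmkw : (G.induce A).connectedComponentMk w = c := hw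
          have hwIS : (w : V) ∈ Stmt17Aux.ISet G A I' := by
            refine ⟨w.2, ?_⟩
            rw [show ((⟨(w : V), w.2⟩ : A)) = w from rfl, hmkw, hc]
            exact hcf1 _
          refine ⟨⟨(w : V), hwIS⟩, ?_, ?_⟩
          · show (G.induce _).connectedComponentMk _ = _
            refine ((Stmt17Aux.compEquiv G A I').eq_symm_apply).mpr (Subtype.ext ?_)
            refine (Stmt17Aux.compEquiv_apply G A I' _).trans ?_
            have hfm : Stmt17Aux.f G A I'
                ((G.induce (Stmt17Aux.ISet G A I')).connectedComponentMk ⟨(w : V), hwIS⟩)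
                = (G.induce A).connectedComponentMk w := rfl
            exact hfm.trans (hmkw.trans hc)
          · have h7 : G.Adj (w : V) ((jf x : V)) := hbb ▸ hwadj
            exact (hjf2 x) ▸ h7
  · rintro ⟨-, -, -, -, -, hIR, M, hMinj, hMadj⟩
    refine ⟨?_, ?_, ?_⟩
    · rintro u ⟨c1, -, rfl⟩ v ⟨c2, -, rfl⟩ hadj
      rcases (hG' _ _).1 hadj with ⟨c, w, bb, -, hb, -, -⟩ | ⟨c, w, bb, -, ha, -, -⟩
      · exact absurd hb (by simp)
      · exact absurd ha (by simp)
    · rintro u ⟨c, hcI, rfl⟩ v hvI hvJ hadj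
      rcases (hG' _ _).1 hadj with ⟨c', w, bb, hac, hbv, hw, hwadj⟩ | ⟨c', w, bb, -, hav, -, -⟩
      · have hcc : c' = c := (Sum.inl_injective hac).symm
        have hmkw : (G.induce A).connectedComponentMk w = c' := hw
        have hwI : (w : V) ∈ Stmt17Aux.ISet G A I' := by
          refine ⟨w.2, ?_⟩
          rw [show ((⟨(w : V), w.2⟩ : A)) = w from rfl, hmkw, hcc]
          exact hcI
        have hbbR : (bb : V) ∈ ({v : V | ∃ h : v ∈ A,
            (G.induce A).connectedComponentMk ⟨v, h⟩ ∈ I'} ∪ Subtype.val '' J')ᶜ := by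
          intro hmem
          rcases hmem with hI | ⟨j, hj, hje⟩
          · exact bb.2.1 hI.1
          · apply hvJ
            rw [hbv]
            exact ⟨j, hj, congrArg Sum.inr (Subtype.ext hje)⟩
        exact hIR _ hwI _ hbbR hwadj
      · exact absurd hav (by simp)
    · choose jf hjf1 hjf2 using fun z : (Sum.inr '' J' :
          Set ((G.induce A).ConnectedComponent ⊕ (nbhd G A : Set V))) => z.2
      have xmem : ∀ z : (Sum.inr '' J' :
          Set ((G.induce A).ConnectedComponent ⊕ (nbhd G A : Set V))),
          ((jf z : V)) ∈ Subtype.val '' J' :=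
        fun z => ⟨jf z, hjf1 z, rfl⟩
      refine ⟨fun z => ⟨Sum.inl (Stmt17Aux.compEquiv G A I' (M ⟨(jf z : V), xmem z⟩)).1,
          ⟨_, (Stmt17Aux.compEquiv G A I' (M ⟨(jf z : V), xmem z⟩)).2, rfl⟩⟩, ?_, ?_⟩
      · intro z1 z2 h
        have h1 := Subtype.ext_iff.mp h
        have h2 := Sum.inl_injective h1
        have h3 := (Stmt17Aux.compEquiv G A I').injective (Subtype.ext h2)
        have h4 := hMinj h3
        have h5 := Subtype.ext_iff.mp h4
        have h6 : jf z1 = jf z2 := Subtype.ext h5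
        apply Subtype.ext
        rw [← hjf2 z1, ← hjf2 z2, h6]
      · intro z
        obtain ⟨w, hw, hwadj⟩ := hMadj ⟨(jf z : V), xmem z⟩
        have hw' : (G.induce (Stmt17Aux.ISet G A I')).connectedComponentMk w
            = M ⟨(jf z : V), xmem z⟩ := hw
        show G'.Adj _ _
        rw [show (z : (G.induce A).ConnectedComponent ⊕ (nbhd G A : Set V))
            = Sum.inr (jf z) from (hjf2 z).symm]
        apply (hG' _ _).2
        refine Or.inr ⟨_, ⟨(w : V), w.2.1⟩, jf z, rfl, rfl, ?_, hwadj⟩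
        show (G.induce A).connectedComponentMk _ = _
        exact congrArg (Stmt17Aux.f G A I') hw'
end

section
/- Let G be a graph with n vertices such that every component of G has more than l vertices, and suppose G has an l-ECOC solution of size at most k where n ≥ (l+1)k + l. Then among all strict ECOC crown decompositions of G there exists a minimal one: a strict ECOC crown decomposition (I,J,R) such that no proper subsets I' ⊊ I, J' ⊆ J yield another strict ECOC crown decomposition. -/
open SimpleGraph

variable {V : Type*}

lemma reach_mono' (G : SimpleGraph V) {X Y : Set V} (hXY : X ⊆ Y) {u v : V} (hu : u ∈ X) (hv : v ∈ X)
    (h : (G.induce X).Reachable ⟨u, hu⟩ ⟨v, hv⟩) :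
    (G.induce Y).Reachable ⟨u, hXY hu⟩ ⟨v, hXY hv⟩ := by
  let f : G.induce X →g G.induce Y := ⟨fun a => ⟨a.1, hXY a.2⟩, fun {a b} hab => hab⟩
  exact h.map f

lemma closed_walk' (G : SimpleGraph V) {X Y : Set V}
    (hcl : ∀ u ∈ X, ∀ v ∈ Y, G.Adj u v → v ∈ X) :
    ∀ {u v : ↥Y} (_ : (G.induce Y).Walk u v) (hu : u.1 ∈ X),
      ∃ hv : v.1 ∈ X, (G.induce X).Reachable ⟨u.1, hu⟩ ⟨v.1, hv⟩ := by
  intro u v p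
  induction p with
  | nil => exact fun hu => ⟨hu, Reachable.refl _⟩
  | @cons a b c h p ih =>
    intro ha
    have hb : b.1 ∈ X := hcl a.1 ha b.1 b.2 h
    obtain ⟨hc, hr⟩ := ih hb
    have hadj : (G.induce X).Adj ⟨a.1, ha⟩ ⟨b.1, hb⟩ := h
    exact ⟨hc, hadj.reachable.trans hr⟩

lemma card_comp_mul' {W : Type*} [Fintype W] (H : SimpleGraph W) {l : ℕ}
    (hall : ∀ c : H.ConnectedComponent, Nat.card c.supp = l) :
    Nat.card H.ConnectedComponent * l = Nat.card W := by
  classical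
  haveI : Fintype H.ConnectedComponent := Fintype.ofFinite _
  rw [Nat.card_eq_fintype_card, Nat.card_eq_fintype_card]
  rw [Fintype.card_congr (Equiv.sigmaFiberEquiv H.connectedComponentMk).symm,
    Fintype.card_sigma]
  have : ∀ c : H.ConnectedComponent,
      Fintype.card {w // H.connectedComponentMk w = c} = l := by
    intro c
    rw [← hall c]
    rw [Nat.card_eq_fintype_card]
    exact Fintype.card_congr (Equiv.subtypeEquivRight (fun v => by
      simp [ConnectedComponent.mem_supp_iff])).symm
  simp [this, Finset.sum_const, mul_comm]

lemma exists_strict_crown [Fintype V] (G : SimpleGraph V) (l k : ℕ) (hl : 1 ≤ l)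
    (hn : (l + 1) * k + l ≤ Fintype.card V)
    (hsol : ∃ S : Set V, IsECOCSol G l S ∧ Nat.card S ≤ k) :
    ∃ I J R : Set V, IsStrictECOCCrown G l I J R := by
  classical
  obtain ⟨S, hS, hSk⟩ := hsol
  have hcount : Nat.card (G.induce Sᶜ).ConnectedComponent * l = Nat.card ↥Sᶜ :=
    card_comp_mul' _ hS
  have hYcard : Nat.card ↥Sᶜ = Fintype.card V - Nat.card ↥S := by
    rw [Nat.card_eq_fintype_card, Nat.card_eq_fintype_card, Fintype.card_compl_set]
  have hCCk : k + 1 ≤ Nat.card (G.induce Sᶜ).ConnectedComponent := by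
    by_contra hcon
    push_neg at hcon
    have h2 : Nat.card (G.induce Sᶜ).ConnectedComponent * l ≤ k * l :=
      Nat.mul_le_mul_right _ (by omega)
    have e1 : (l+1)*k = l*k + k := by ring
    have e2 : k*l = l*k := by ring
    omega
  -- the bipartite structure
  let adjC : (G.induce Sᶜ).ConnectedComponent → V → Prop :=
    fun c s => ∃ u : ↥Sᶜ, (G.induce Sᶜ).connectedComponentMk u = c ∧ G.Adj u.1 s
  haveI : Fintype (G.induce Sᶜ).ConnectedComponent := Fintype.ofFinite _
  let CJ : Finset V → Finset (G.induce Sᶜ).ConnectedComponent :=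
    fun J => Finset.univ.filter (fun c => ∀ s : V, s ∈ S → adjC c s → s ∈ J)
  have hSfin : Nat.card ↥S = S.toFinset.card := by
    rw [Nat.card_coe_set_eq, Set.ncard_eq_toFinset_card']
  have hfull : CJ S.toFinset = Finset.univ := by
    ext c
    simp only [CJ, Finset.mem_filter, Finset.mem_univ, true_and, iff_true]
    intro s hs _
    exact Set.mem_toFinset.mpr hs
  let F : Finset (Finset V) := S.toFinset.powerset.filter (fun J => J.card + 1 ≤ (CJ J).card)
  have hFne : S.toFinset ∈ F := by
    refine Finset.mem_filter.mpr ⟨Finset.mem_powerset_self _, ?_⟩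
    rw [hfull, Finset.card_univ, ← Nat.card_eq_fintype_card]
    omega
  obtain ⟨Jm, hJmF, hJmin⟩ := Finset.exists_min_image F Finset.card ⟨_, hFne⟩
  have hJmS : Jm ⊆ S.toFinset := Finset.mem_powerset.mp (Finset.mem_filter.mp hJmF).1
  have hJmcard : Jm.card + 1 ≤ (CJ Jm).card := (Finset.mem_filter.mp hJmF).2
  -- Hall's condition
  have hHall : ∀ s : Finset {x // x ∈ Jm},
      s.card ≤ (s.biUnion (fun x => (CJ Jm).filter (fun c => adjC c x.1))).card := by
    intro s
    by_contra hcon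
    push_neg at hcon
    rcases s.eq_empty_or_nonempty with rfl | hsne
    · simp at hcon
    set X : Finset V := s.image Subtype.val with hX
    have hXcard : X.card = s.card := Finset.card_image_of_injective _ Subtype.val_injective
    have hXJ : X ⊆ Jm := by
      intro x hx
      obtain ⟨a, _, rfl⟩ := Finset.mem_image.mp hx
      exact a.2
    have hXne : X.Nonempty := hsne.image _
    set B := s.biUnion (fun x => (CJ Jm).filter (fun c => adjC c x.1)) with hB
    have hsub : CJ Jm \ B ⊆ CJ (Jm \ X) := by
      intro c hc
      obtain ⟨hc1, hc2⟩ := Finset.mem_sdiff.mp hc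
      have hc1' := (Finset.mem_filter.mp hc1).2
      refine Finset.mem_filter.mpr ⟨Finset.mem_univ _, ?_⟩
      intro t ht hadj
      have htJ : t ∈ Jm := hc1' t ht hadj
      refine Finset.mem_sdiff.mpr ⟨htJ, ?_⟩
      intro htX
      obtain ⟨a, ha, hav⟩ := Finset.mem_image.mp htX
      refine hc2 (Finset.mem_biUnion.mpr ⟨a, ha, Finset.mem_filter.mpr ⟨hc1, ?_⟩⟩)
      rw [hav]
      exact hadj
    have h4 : (CJ Jm).card ≤ (CJ Jm \ B).card + B.card := Finset.card_le_card_sdiff_add_card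
    have h5 := Finset.card_le_card hsub
    have h6 : (Jm \ X).card = Jm.card - X.card := Finset.card_sdiff_of_subset hXJ
    have hXpos : 0 < X.card := Finset.card_pos.mpr hXne
    have hXle : X.card ≤ Jm.card := Finset.card_le_card hXJ
    have h7 : Jm \ X ∈ F := by
      refine Finset.mem_filter.mpr ⟨Finset.mem_powerset.mpr ((Finset.sdiff_subset).trans hJmS), ?_⟩
      omega
    have := hJmin _ h7
    omega
  obtain ⟨f, hfinj, hfmem⟩ := (Finset.all_card_le_biUnion_card_iff_exists_injective
    (fun x : {x // x ∈ Jm} => (CJ Jm).filter (fun c => adjC c x.1))).mp hHall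
  -- the crown
  set I : Set V := {v | ∃ h : v ∈ Sᶜ, (G.induce Sᶜ).connectedComponentMk ⟨v, h⟩ ∈ CJ Jm}
    with hIdef
  have hIY : I ⊆ Sᶜ := fun v hv => hv.choose
  have hclosed : ∀ u ∈ I, ∀ v ∈ Sᶜ, G.Adj u v → v ∈ I := by
    rintro u ⟨hu, hc⟩ v hv hadj
    refine ⟨hv, ?_⟩
    have hadj' : (G.induce Sᶜ).Adj ⟨u, hu⟩ ⟨v, hv⟩ := hadj
    have he : (G.induce Sᶜ).connectedComponentMk ⟨v, hv⟩
        = (G.induce Sᶜ).connectedComponentMk ⟨u, hu⟩ :=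
      ConnectedComponent.sound hadj'.symm.reachable
    rw [he]; exact hc
  have hsuppI : ∀ c ∈ CJ Jm, ∀ u : ↥Sᶜ, (G.induce Sᶜ).connectedComponentMk u = c → u.1 ∈ I := by
    intro c hc u hu
    exact ⟨u.2, by rw [Subtype.eta, hu]; exact hc⟩
  -- map from components in CJ Jm to components of induce I
  let g : {c // c ∈ CJ Jm} → (G.induce I).ConnectedComponent :=
    fun c => (G.induce I).connectedComponentMk
      ⟨(c.1.exists_rep.choose : ↥Sᶜ).1, hsuppI c.1 c.2 _ c.1.exists_rep.choose_spec⟩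
  have hg : ∀ (c : {c // c ∈ CJ Jm}) (u : ↥Sᶜ)
      (hmk : (G.induce Sᶜ).connectedComponentMk u = c.1) (hu : u.1 ∈ I),
      (G.induce I).connectedComponentMk ⟨u.1, hu⟩ = g c := by
    intro c u hmk hu
    have hreach : (G.induce Sᶜ).Reachable u c.1.exists_rep.choose :=
      ConnectedComponent.eq.mp (by rw [hmk]; exact c.1.exists_rep.choose_spec.symm)
    obtain ⟨hv, hr⟩ := closed_walk' G hclosed hreach.some hu
    exact ConnectedComponent.sound hr
  have hginj : Function.Injective g := by
    intro c1 c2 hgc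
    have h1 := ConnectedComponent.eq.mp hgc
    have h2 := reach_mono' G hIY _ _ h1
    refine Subtype.ext ?_
    have e1 := c1.1.exists_rep.choose_spec
    have e2 := c2.1.exists_rep.choose_spec
    rw [← e1, ← e2]
    exact ConnectedComponent.sound h2
  -- sizes of components of induce I
  have hsize : AllCompsSize G I l := by
    intro c'
    obtain ⟨w, hw⟩ := c'.exists_rep
    obtain ⟨hwY, hwc⟩ := w.2
    have e : ↥c'.supp ≃ ↥((G.induce Sᶜ).connectedComponentMk ⟨w.1, hwY⟩).supp :=
      { toFun := fun x => ⟨⟨x.1.1, hIY x.1.2⟩, by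
          have hx : (G.induce I).connectedComponentMk x.1 = c' := x.2
          have hr : (G.induce I).Reachable x.1 w := ConnectedComponent.eq.mp (by rw [hx]; exact hw.symm)
          have hr2 := reach_mono' G hIY x.1.2 w.2 hr
          exact ConnectedComponent.sound hr2⟩
        invFun := fun y => ⟨⟨y.1.1, hsuppI _ hwc y.1 y.2⟩, by
          have hr : (G.induce Sᶜ).Reachable y.1 ⟨w.1, hwY⟩ := ConnectedComponent.eq.mp y.2
          obtain ⟨hvI, hrI⟩ := closed_walk' G hclosed hr.some (hsuppI _ hwc y.1 y.2)
          exact (ConnectedComponent.sound hrI).trans hw⟩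
        left_inv := fun x => Subtype.ext (Subtype.ext rfl)
        right_inv := fun y => Subtype.ext (Subtype.ext rfl) }
    rw [← hS ((G.induce Sᶜ).connectedComponentMk ⟨w.1, hwY⟩)]
    exact Nat.card_congr e
  -- the matching
  have hmemJ : ∀ x : ↥(↑Jm : Set V), x.1 ∈ Jm := fun x => x.2
  let M : ↥(↑Jm : Set V) → (G.induce I).ConnectedComponent :=
    fun x => g ⟨f ⟨x.1, hmemJ x⟩, (Finset.mem_filter.mp (hfmem ⟨x.1, hmemJ x⟩)).1⟩
  have hMinj : Function.Injective M := by
    intro x y h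
    have h1 := hginj h
    have h2 : f ⟨x.1, hmemJ x⟩ = f ⟨y.1, hmemJ y⟩ := congrArg Subtype.val h1
    have h3 := hfinj h2
    exact Subtype.ext (congrArg Subtype.val h3)
  have hMadj : ∀ x : ↥(↑Jm : Set V), ∃ u ∈ (M x).supp, G.Adj (u : V) (x : V) := by
    intro x
    have hf2 := (Finset.mem_filter.mp (hfmem ⟨x.1, hmemJ x⟩)).2
    obtain ⟨u, hu1, hu2⟩ := hf2
    have huI : u.1 ∈ I := hsuppI _ (Finset.mem_filter.mp (hfmem ⟨x.1, hmemJ x⟩)).1 u hu1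
    refine ⟨⟨u.1, huI⟩, ?_, hu2⟩
    rw [ConnectedComponent.mem_supp_iff]
    exact hg _ u hu1 huI
  -- non-emptiness
  have hCJne : ∃ c, c ∈ CJ Jm := by
    have : 0 < (CJ Jm).card := by omega
    obtain ⟨c, hc⟩ := Finset.card_pos.mp this
    exact ⟨c, hc⟩
  obtain ⟨c0, hc0⟩ := hCJne
  have hIne : I.Nonempty :=
    ⟨c0.exists_rep.choose.1, hsuppI c0 hc0 _ c0.exists_rep.choose_spec⟩
  -- cardinalities
  have hJcard : Nat.card ↥(↑Jm : Set V) = Jm.card := by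
    rw [Nat.card_coe_set_eq, Set.ncard_coe_finset]
  have hstrict : Nat.card ↥(↑Jm : Set V) + 1 ≤ Nat.card ((G.induce I).ConnectedComponent) := by
    have h1 : Nat.card {c // c ∈ CJ Jm} ≤ Nat.card ((G.induce I).ConnectedComponent) :=
      Nat.card_le_card_of_injective g hginj
    have h2 : Nat.card {c // c ∈ CJ Jm} = (CJ Jm).card := by
      rw [Nat.card_eq_fintype_card]; exact Fintype.card_coe _
    omega
  refine ⟨I, ↑Jm, (I ∪ ↑Jm)ᶜ, ⟨?_, ?_, ?_, ?_, hsize, ?_, ⟨M, hMinj, hMadj⟩⟩, hIne, hstrict⟩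
  · exact Set.union_compl_self _
  · rw [Set.disjoint_left]
    intro v hvI hvJ
    exact hIY hvI (Set.mem_toFinset.mp (hJmS hvJ))
  · rw [Set.disjoint_left]
    intro v hvI hvR
    exact hvR (Or.inl hvI)
  · rw [Set.disjoint_left]
    intro v hvJ hvR
    exact hvR (Or.inr hvJ)
  · -- no edges between I and R
    intro u hu v hv hadj
    rcases Classical.em (v ∈ Sᶜ) with hvY | hvY
    · exact hv (Or.inl (hclosed u hu v hvY hadj))
    · have hvS : v ∈ S := not_not.mp hvY
      obtain ⟨huY, huc⟩ := hu
      have hcprop := (Finset.mem_filter.mp huc).2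
      have : v ∈ Jm := hcprop v hvS ⟨⟨u, huY⟩, rfl, hadj⟩
      exact hv (Or.inr this)

theorem stmt18 [Fintype V] (G : SimpleGraph V) (l k : ℕ) (hl : 1 ≤ l)
    (hn : (l + 1) * k + l ≤ Fintype.card V)
    (hcomp : ∀ c : G.ConnectedComponent, l < Nat.card c.supp)
    (hsol : ∃ S : Set V, IsECOCSol G l S ∧ Nat.card S ≤ k) :
    ∃ I J R : Set V, IsStrictECOCCrown G l I J R ∧
      ¬ ∃ I' J' : Set V, I' ⊂ I ∧ J' ⊆ J ∧
        IsStrictECOCCrown G l I' J' (I' ∪ J')ᶜ := by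
  classical
  have hex : ∃ I J R : Set V, IsStrictECOCCrown G l I J R :=
    exists_strict_crown G l k hl hn hsol
  set P : ℕ → Prop := fun n => ∃ I J R : Set V, IsStrictECOCCrown G l I J R ∧ Nat.card I = n
    with hP
  have hPne : ∃ n, P n := by
    obtain ⟨I, J, R, h⟩ := hex
    exact ⟨Nat.card I, I, J, R, h, rfl⟩
  obtain ⟨I0, J0, R0, h0, hcard⟩ := Nat.find_spec hPne
  refine ⟨I0, J0, R0, h0, ?_⟩
  rintro ⟨I', J', hI', hJ', h'⟩
  have hlt : Nat.card I' < Nat.card I0 := by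
    rw [Nat.card_coe_set_eq, Nat.card_coe_set_eq]
    exact Set.ncard_lt_ncard hI' (Set.toFinite _)
  have hP' : P (Nat.card I') := ⟨I', J', _, h', rfl⟩
  exact Nat.find_min hPne (by omega) hP'
end
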